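/- arXiv:1302.0279 — 2 statements merged into one kernel-verified Lean document; each statement's English description precedes it below -/
import Mathlib

section
/- Fix q ≥ 0. The ground-state energy is strictly increasing in the magnetization: for all 0 ≤ M < M' ≤ 1, E_g(M, q) < E_g(M', q). -/
open MeasureTheory Filter Topology Asymptotics
open scoped RealInnerProductSpace

noncomputable section

abbrev E3 := EuclideanSpace ℝ (Fin 3)


lemma norm_gradient_eq (f : E3 → ℝ) (x : E3) : ‖gradient f x‖ = ‖fderiv ℝ f x‖ := by
  unfold gradient
  exact LinearIsometryEquiv.norm_map _ _

lemma weighted_cs {a b f g F G : ℝ} (ha : 0 ≤ a) (hb : 0 ≤ b) (hf : 0 ≤ f) (hg : 0 ≤ g)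
    (hF : 0 ≤ F) (hG : 0 ≤ G) :
    a*f*F + b*g*G ≤ Real.sqrt (a*f^2+b*g^2) * Real.sqrt (a*F^2+b*G^2) := by
  rw [← Real.sqrt_mul (by positivity)]
  rw [← Real.sqrt_sq (by positivity : (0:ℝ) ≤ a*f*F + b*g*G)]
  apply Real.sqrt_le_sqrt
  nlinarith [sq_nonneg (f*G - g*F), mul_nonneg ha hb, sq_nonneg (f*G), sq_nonneg (g*F)]

lemma sqrt_add_le {a b f g : ℝ} (ha : 0 ≤ a) (hb : 0 ≤ b) (hf : 0 ≤ f) (hg : 0 ≤ g) :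
    Real.sqrt (a*f^2 + b*g^2) ≤ Real.sqrt a * f + Real.sqrt b * g := by
  rw [← Real.sqrt_sq (by positivity : (0:ℝ) ≤ Real.sqrt a * f + Real.sqrt b * g)]
  apply Real.sqrt_le_sqrt
  have h1 : Real.sqrt a ^ 2 = a := Real.sq_sqrt ha
  have h2 : Real.sqrt b ^ 2 = b := Real.sq_sqrt hb
  nlinarith [mul_nonneg (mul_nonneg (Real.sqrt_nonneg a) hf) (mul_nonneg (Real.sqrt_nonneg b) hg)]

section SqrtMix

variable {f g : E3 → ℝ} {a b : ℝ}

set_option maxHeartbeats 2000000 in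
/-- The mixed function `√(a f² + b g²)` is `C¹` with pointwise gradient bound. -/
theorem sqrtMix (ha : 0 < a) (hb : 0 < b) (hf : ContDiff ℝ 1 f) (hg : ContDiff ℝ 1 g)
    (hf0 : ∀ x, 0 ≤ f x) (hg0 : ∀ x, 0 ≤ g x) :
    ContDiff ℝ 1 (fun x => Real.sqrt (a * f x ^ 2 + b * g x ^ 2)) ∧
    (∀ x, ‖gradient (fun x => Real.sqrt (a * f x ^ 2 + b * g x ^ 2)) x‖ ^ 2
        ≤ a * ‖gradient f x‖ ^ 2 + b * ‖gradient g x‖ ^ 2) := by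
  set h : E3 → ℝ := fun x => a * f x ^ 2 + b * g x ^ 2 with hh_def
  have hh0 : ∀ x, 0 ≤ h x := fun x => by positivity
  set v : E3 → ℝ := fun x => Real.sqrt (h x) with hv_def
  set Df : E3 → (E3 →L[ℝ] ℝ) := fun x => fderiv ℝ f x with hDf_def
  set Dg : E3 → (E3 →L[ℝ] ℝ) := fun x => fderiv ℝ g x with hDg_def
  set Dv : E3 → (E3 →L[ℝ] ℝ) := fun x =>
    if h x = 0 then 0 else (Real.sqrt (h x))⁻¹ • ((a * f x) • Df x + (b * g x) • Dg x)
    with hDv_def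
  have hfd : ∀ x, HasFDerivAt f (Df x) x := fun x => (hf.differentiable one_ne_zero x).hasFDerivAt
  have hgd : ∀ x, HasFDerivAt g (Dg x) x := fun x => (hg.differentiable one_ne_zero x).hasFDerivAt
  -- derivative of h
  have hhd : ∀ x, HasFDerivAt h ((2*a*f x) • Df x + (2*b*g x) • Dg x) x := by
    intro x
    have h1 : HasFDerivAt (fun y => a * f y ^ 2) ((2*a*f x) • Df x) x := by
      have := ((hfd x).mul (hfd x)).const_mul a
      have e : (fun y => a * (f y * f y)) = fun y => a * f y ^ 2 := by
        funext y; ring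
      simp only [Pi.mul_apply] at this
      rw [e] at this
      have heq : a • (f x • Df x + f x • Df x) = (2*a*f x) • Df x := by module
      rwa [heq] at this
    have h2 : HasFDerivAt (fun y => b * g y ^ 2) ((2*b*g x) • Dg x) x := by
      have := ((hgd x).mul (hgd x)).const_mul b
      have e : (fun y => b * (g y * g y)) = fun y => b * g y ^ 2 := by
        funext y; ring
      simp only [Pi.mul_apply] at this
      rw [e] at this
      have heq : b • (g x • Dg x + g x • Dg x) = (2*b*g x) • Dg x := by module
      rwa [heq] at this
    exact h1.add h2
  -- zeros of h
  have hzero : ∀ x, h x = 0 → f x = 0 ∧ g x = 0 := by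
    intro x hx
    simp only [hh_def] at hx
    have h1 : f x ^ 2 = 0 := by nlinarith [sq_nonneg (f x), sq_nonneg (g x)]
    have h2 : g x ^ 2 = 0 := by nlinarith [sq_nonneg (f x), sq_nonneg (g x)]
    exact ⟨pow_eq_zero_iff two_ne_zero |>.mp h1, pow_eq_zero_iff two_ne_zero |>.mp h2⟩
  have hDzero : ∀ x, h x = 0 → Df x = 0 ∧ Dg x = 0 := by
    intro x hx
    obtain ⟨hfx, hgx⟩ := hzero x hx
    constructor
    · apply IsLocalMin.fderiv_eq_zero
      apply Filter.Eventually.of_forall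
      intro y; rw [hfx]; exact hf0 y
    · apply IsLocalMin.fderiv_eq_zero
      apply Filter.Eventually.of_forall
      intro y; rw [hgx]; exact hg0 y
  -- main derivative claim
  have hvd : ∀ x, HasFDerivAt v (Dv x) x := by
    intro x
    by_cases hx : h x = 0
    · simp only [hDv_def, hx, if_pos]
      obtain ⟨hfx, hgx⟩ := hzero x hx
      obtain ⟨hDfx, hDgx⟩ := hDzero x hx
      have hfo : (fun y => f y) =o[𝓝 x] (fun y => y - x) := by
        have := ((hfd x).congr_fderiv hDfx).isLittleO
        simpa [hfx] using this
      have hgo : (fun y => g y) =o[𝓝 x] (fun y => y - x) := by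
        have := ((hgd x).congr_fderiv hDgx).isLittleO
        simpa [hgx] using this
      have hwo : (fun y => Real.sqrt a * f y + Real.sqrt b * g y) =o[𝓝 x] (fun y => y - x) :=
        (hfo.const_mul_left _).add (hgo.const_mul_left _)
      apply HasFDerivAt.of_isLittleO
      have hvx : v x = 0 := by simp [hv_def, hx]
      have hbound : ∀ y, ‖v y - v x - (0 : E3 →L[ℝ] ℝ) (y - x)‖
          ≤ 1 * ‖Real.sqrt a * f y + Real.sqrt b * g y‖ := by
        intro y
        simp only [ContinuousLinearMap.zero_apply, sub_zero, hvx, sub_zero, one_mul]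
        rw [Real.norm_eq_abs, Real.norm_eq_abs]
        rw [abs_of_nonneg (Real.sqrt_nonneg _)]
        calc v y ≤ Real.sqrt a * f y + Real.sqrt b * g y :=
              sqrt_add_le ha.le hb.le (hf0 y) (hg0 y)
          _ ≤ |Real.sqrt a * f y + Real.sqrt b * g y| := le_abs_self _
      exact (IsBigO.of_bound 1 (Filter.Eventually.of_forall hbound)).trans_isLittleO hwo
    · simp only [hDv_def, hx, if_neg, if_false]
      have hxpos : 0 < h x := lt_of_le_of_ne (hh0 x) (Ne.symm hx)
      have hs := Real.hasDerivAt_sqrt hx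
      have := hs.comp_hasFDerivAt x (hhd x)
      have hsne : Real.sqrt (h x) ≠ 0 := by positivity
      have heq : (1 / (2 * Real.sqrt (h x))) • ((2*a*f x) • Df x + (2*b*g x) • Dg x)
          = (Real.sqrt (h x))⁻¹ • ((a * f x) • Df x + (b * g x) • Dg x) := by
        rw [smul_add, smul_add, smul_smul, smul_smul, smul_smul, smul_smul]
        congr 2 <;> field_simp <;> ring
      have : HasFDerivAt (fun y => Real.sqrt (h y))
          ((1 / (2 * Real.sqrt (h x))) • ((2*a*f x) • Df x + (2*b*g x) • Dg x)) x := this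
      rw [heq] at this
      exact this
  -- norm bound on Dv
  have hDvbound : ∀ x, ‖Dv x‖ ≤ Real.sqrt (a * ‖Df x‖^2 + b * ‖Dg x‖^2) := by
    intro x
    by_cases hx : h x = 0
    · simp only [hDv_def, hx, if_pos, norm_zero]
      positivity
    · simp only [hDv_def, hx, if_neg, if_false]
      have hxpos : 0 < h x := lt_of_le_of_ne (hh0 x) (Ne.symm hx)
      have hsne : 0 < Real.sqrt (h x) := Real.sqrt_pos.mpr hxpos
      have hns : ‖(Real.sqrt (h x))⁻¹ • ((a * f x) • Df x + (b * g x) • Dg x)‖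
          ≤ (Real.sqrt (h x))⁻¹ * ‖(a * f x) • Df x + (b * g x) • Dg x‖ := by
        refine le_trans (ContinuousLinearMap.opNorm_smul_le _ _) ?_
        rw [Real.norm_eq_abs, abs_of_nonneg (inv_nonneg.mpr hsne.le)]
      refine le_trans hns ?_
      have h1 : ‖(a * f x) • Df x + (b * g x) • Dg x‖
          ≤ a * f x * ‖Df x‖ + b * g x * ‖Dg x‖ := by
        calc ‖(a * f x) • Df x + (b * g x) • Dg x‖
            ≤ ‖(a * f x) • Df x‖ + ‖(b * g x) • Dg x‖ := norm_add_le _ _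
          _ ≤ a * f x * ‖Df x‖ + b * g x * ‖Dg x‖ := by
              have e1 : ‖(a * f x) • Df x‖ ≤ a * f x * ‖Df x‖ := by
                refine le_trans (ContinuousLinearMap.opNorm_smul_le _ _) ?_
                rw [Real.norm_eq_abs, abs_of_nonneg (mul_nonneg ha.le (hf0 x))]
              have e2 : ‖(b * g x) • Dg x‖ ≤ b * g x * ‖Dg x‖ := by
                refine le_trans (ContinuousLinearMap.opNorm_smul_le _ _) ?_
                rw [Real.norm_eq_abs, abs_of_nonneg (mul_nonneg hb.le (hg0 x))]
              exact add_le_add e1 e2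
      have h2 : a * f x * ‖Df x‖ + b * g x * ‖Dg x‖
          ≤ Real.sqrt (h x) * Real.sqrt (a * ‖Df x‖^2 + b * ‖Dg x‖^2) :=
        weighted_cs ha.le hb.le (hf0 x) (hg0 x) (norm_nonneg _) (norm_nonneg _)
      calc (Real.sqrt (h x))⁻¹ * ‖(a * f x) • Df x + (b * g x) • Dg x‖
          ≤ (Real.sqrt (h x))⁻¹ * (Real.sqrt (h x) * Real.sqrt (a * ‖Df x‖^2 + b * ‖Dg x‖^2)) := by
            apply mul_le_mul_of_nonneg_left (h1.trans h2) (inv_nonneg.mpr hsne.le)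
        _ = Real.sqrt (a * ‖Df x‖^2 + b * ‖Dg x‖^2) := by
            field_simp
  -- continuity of Dv
  have hDfc : Continuous Df := hf.continuous_fderiv one_ne_zero
  have hDgc : Continuous Dg := hg.continuous_fderiv one_ne_zero
  have hhc : Continuous h := by
    apply Continuous.add
    · exact (continuous_const.mul ((hf.continuous).pow 2))
    · exact (continuous_const.mul ((hg.continuous).pow 2))
  have hmc : Continuous (fun x => Real.sqrt (a * ‖Df x‖^2 + b * ‖Dg x‖^2)) := by
    apply Real.continuous_sqrt.comp
    exact (continuous_const.mul ((hDfc.norm).pow 2)).add (continuous_const.mul ((hDgc.norm).pow 2))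
  have hDvc : Continuous Dv := by
    rw [continuous_iff_continuousAt]
    intro x
    by_cases hx : h x = 0
    · have hDvx : Dv x = 0 := by simp [hDv_def, hx]
      rw [ContinuousAt, hDvx]
      apply squeeze_zero_norm hDvbound
      have hz : Real.sqrt (a * ‖Df x‖^2 + b * ‖Dg x‖^2) = 0 := by
        obtain ⟨h1, h2⟩ := hDzero x hx
        simp [h1, h2]
      have := hmc.continuousAt (x := x)
      rw [ContinuousAt, hz] at this
      exact this
    · have hev : ∀ᶠ y in 𝓝 x, Dv y =
          (Real.sqrt (h y))⁻¹ • ((a * f y) • Df y + (b * g y) • Dg y) := by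
        have : ∀ᶠ y in 𝓝 x, h y ≠ 0 := hhc.continuousAt.eventually_ne hx
        filter_upwards [this] with y hy
        simp [hDv_def, hy]
      have hxpos : 0 < h x := lt_of_le_of_ne (hh0 x) (Ne.symm hx)
      have hsne : Real.sqrt (h x) ≠ 0 := by positivity
      have hcont : ContinuousAt
          (fun y => (Real.sqrt (h y))⁻¹ • ((a * f y) • Df y + (b * g y) • Dg y)) x := by
        apply ContinuousAt.fun_smul
        · exact ((Real.continuous_sqrt.comp hhc).continuousAt).inv₀ hsne
        · apply ContinuousAt.fun_add
          · exact ContinuousAt.fun_smul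
              ((continuous_const.mul hf.continuous).continuousAt) hDfc.continuousAt
          · exact ContinuousAt.fun_smul
              ((continuous_const.mul hg.continuous).continuousAt) hDgc.continuousAt
      exact hcont.congr (hev.mono fun y hy => hy.symm)
  -- assemble
  have hdiff : Differentiable ℝ v := fun x => (hvd x).differentiableAt
  have hfderiv : fderiv ℝ v = Dv := funext fun x => (hvd x).fderiv
  constructor
  · rw [contDiff_one_iff_fderiv]
    exact ⟨hdiff, by rw [hfderiv]; exact hDvc⟩
  · intro x
    have h1 : ‖gradient v x‖ = ‖Dv x‖ := by
      rw [norm_gradient_eq, hfderiv]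
    rw [h1]
    have h2 := hDvbound x
    have h3 : ‖Dv x‖^2 ≤ Real.sqrt (a * ‖Df x‖^2 + b * ‖Dg x‖^2) ^ 2 := by
      apply pow_le_pow_left₀ (norm_nonneg _) h2 2
    rw [Real.sq_sqrt (by positivity)] at h3
    calc ‖Dv x‖^2 ≤ a * ‖Df x‖^2 + b * ‖Dg x‖^2 := h3
      _ = a * ‖gradient f x‖^2 + b * ‖gradient g x‖^2 := by
          rw [norm_gradient_eq, norm_gradient_eq]

end SqrtMix


/-- Pointwise squared norm `|u|² = u₁² + u₀² + u₋₁²` of a triple of functions. -/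
def nsq (u1 u0 um1 : E3 → ℝ) (x : E3) : ℝ := u1 x ^ 2 + u0 x ^ 2 + um1 x ^ 2

/-- The energy functional `ℰ_q[u]`. -/
def energy (V : E3 → ℝ) (βn βs q : ℝ) (u1 u0 um1 : E3 → ℝ) : ℝ :=
  ∫ x : E3,
    (‖gradient u1 x‖ ^ 2 + ‖gradient u0 x‖ ^ 2 + ‖gradient um1 x‖ ^ 2
      + V x * nsq u1 u0 um1 x
      + βn * (nsq u1 u0 um1 x) ^ 2
      + βs * (2 * u0 x ^ 2 * (u1 x - um1 x) ^ 2 + (u1 x ^ 2 - um1 x ^ 2) ^ 2)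
      + q * (u1 x ^ 2 + um1 x ^ 2))

/-- The admissible class `𝔸_M`: triples of nonnegative `C¹` functions with the
required integrability and the constraints `𝒩[u] = 1`, `ℳ[u] = M`. -/
structure Admissible (V : E3 → ℝ) (M : ℝ) (u1 u0 um1 : E3 → ℝ) : Prop where
  smooth1 : ContDiff ℝ 1 u1
  smooth0 : ContDiff ℝ 1 u0
  smoothm1 : ContDiff ℝ 1 um1
  nonneg1 : ∀ x, 0 ≤ u1 x
  nonneg0 : ∀ x, 0 ≤ u0 x
  nonnegm1 : ∀ x, 0 ≤ um1 x
  l2_1 : Integrable (fun x => u1 x ^ 2)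
  l2_0 : Integrable (fun x => u0 x ^ 2)
  l2_m1 : Integrable (fun x => um1 x ^ 2)
  grad2_1 : Integrable (fun x => ‖gradient u1 x‖ ^ 2)
  grad2_0 : Integrable (fun x => ‖gradient u0 x‖ ^ 2)
  grad2_m1 : Integrable (fun x => ‖gradient um1 x‖ ^ 2)
  l4_1 : Integrable (fun x => u1 x ^ 4)
  l4_0 : Integrable (fun x => u0 x ^ 4)
  l4_m1 : Integrable (fun x => um1 x ^ 4)
  pot : Integrable (fun x => V x * nsq u1 u0 um1 x)
  mass : ∫ x : E3, nsq u1 u0 um1 x = 1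
  magnetization : ∫ x : E3, (u1 x ^ 2 - um1 x ^ 2) = M

/-- Hypotheses on the trap potential `V`: measurable, nonnegative, locally bounded,
and tending to infinity at infinity. -/
structure TrapPotential (V : E3 → ℝ) : Prop where
  meas : Measurable V
  nonneg : ∀ x, 0 ≤ V x
  bddOnBalls : ∀ r : ℝ, ∃ C : ℝ, ∀ x : E3, ‖x‖ ≤ r → V x ≤ C
  tendsToInfty : ∀ C : ℝ, 0 < C → ∃ R : ℝ, 0 < R ∧ ∀ x : E3, R ≤ ‖x‖ → C ≤ V x

/-- `u` is a ground state: admissible and minimizes the energy over `𝔸_M`. -/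
def IsGroundState (V : E3 → ℝ) (βn βs q M : ℝ) (u1 u0 um1 : E3 → ℝ) : Prop :=
  Admissible V M u1 u0 um1 ∧
    ∀ v1 v0 vm1 : E3 → ℝ, Admissible V M v1 v0 vm1 →
      energy V βn βs q u1 u0 um1 ≤ energy V βn βs q v1 v0 vm1

/-- The ground-state energy `E_g(M,q) = inf {ℰ_q[u] : u ∈ 𝔸_M}`. -/
def groundEnergy (V : E3 → ℝ) (βn βs q M : ℝ) : ℝ :=
  sInf {E : ℝ | ∃ u1 u0 um1 : E3 → ℝ, Admissible V M u1 u0 um1 ∧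
    energy V βn βs q u1 u0 um1 = E}


section Helpers

open Filter Topology Asymptotics

variable {V : E3 → ℝ} {βn βs q M : ℝ} {u1 u0 um1 : E3 → ℝ}

/-- The energy integrand. -/
def eInt (V : E3 → ℝ) (βn βs q : ℝ) (u1 u0 um1 : E3 → ℝ) (x : E3) : ℝ :=
  ‖gradient u1 x‖ ^ 2 + ‖gradient u0 x‖ ^ 2 + ‖gradient um1 x‖ ^ 2
      + V x * nsq u1 u0 um1 x
      + βn * (nsq u1 u0 um1 x) ^ 2
      + βs * (2 * u0 x ^ 2 * (u1 x - um1 x) ^ 2 + (u1 x ^ 2 - um1 x ^ 2) ^ 2)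
      + q * (u1 x ^ 2 + um1 x ^ 2)

lemma energy_eq_eInt : energy V βn βs q u1 u0 um1 = ∫ x : E3, eInt V βn βs q u1 u0 um1 x := rfl

lemma eInt_nonneg (hV : ∀ x, 0 ≤ V x) (hβn : 0 ≤ βn) (hβs : 0 ≤ βs) (hq : 0 ≤ q) (x : E3) :
    0 ≤ eInt V βn βs q u1 u0 um1 x := by
  have h1 : 0 ≤ nsq u1 u0 um1 x := by unfold nsq; positivity
  have := hV x
  unfold eInt
  positivity

lemma continuous_gradient {f : E3 → ℝ} (hf : ContDiff ℝ 1 f) : Continuous (gradient f) := by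
  unfold gradient
  exact (LinearIsometryEquiv.continuous _).comp (hf.continuous_fderiv one_ne_zero)

lemma Admissible.continuous_nsq (hu : Admissible V M u1 u0 um1) :
    Continuous (nsq u1 u0 um1) := by
  unfold nsq
  exact ((hu.smooth1.continuous.pow 2).add (hu.smooth0.continuous.pow 2)).add
    (hu.smoothm1.continuous.pow 2)

lemma Admissible.integrable_nsq_sq (hu : Admissible V M u1 u0 um1) :
    Integrable (fun x => (nsq u1 u0 um1 x) ^ 2) := by
  have hmaj : Integrable (fun x => 3 * (u1 x ^ 4 + u0 x ^ 4 + um1 x ^ 4)) :=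
    (((hu.l4_1.add hu.l4_0).add hu.l4_m1).const_mul 3)
  apply hmaj.mono' ((hu.continuous_nsq.pow 2).aestronglyMeasurable)
  apply Filter.Eventually.of_forall
  intro x
  simp only [Pi.pow_apply]
  rw [Real.norm_eq_abs, abs_of_nonneg (by unfold nsq; positivity)]
  unfold nsq
  nlinarith [sq_nonneg (u1 x ^ 2 - u0 x ^ 2), sq_nonneg (u1 x ^ 2 - um1 x ^ 2),
    sq_nonneg (u0 x ^ 2 - um1 x ^ 2)]

lemma Admissible.integrable_spin (hu : Admissible V M u1 u0 um1) :
    Integrable (fun x => 2 * u0 x ^ 2 * (u1 x - um1 x) ^ 2 + (u1 x ^ 2 - um1 x ^ 2) ^ 2) := by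
  have hmaj : Integrable (fun x => 8 * (u1 x ^ 4 + u0 x ^ 4 + um1 x ^ 4)) :=
    (((hu.l4_1.add hu.l4_0).add hu.l4_m1).const_mul 8)
  apply hmaj.mono' ?_ (Filter.Eventually.of_forall fun x => ?_)
  · apply Continuous.aestronglyMeasurable
    have c1 := hu.smooth1.continuous
    have c0 := hu.smooth0.continuous
    have cm1 := hu.smoothm1.continuous
    fun_prop
  · rw [Real.norm_eq_abs, abs_of_nonneg (by positivity)]
    nlinarith [sq_nonneg (u1 x ^ 2 - u0 x ^ 2), sq_nonneg (u0 x ^ 2 - um1 x ^ 2),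
      sq_nonneg (u1 x ^ 2 - um1 x ^ 2), sq_nonneg (u1 x + um1 x), sq_nonneg (u1 x - um1 x),
      sq_nonneg (u0 x * (u1 x - um1 x)), sq_nonneg (u1 x * um1 x),
      sq_nonneg (u0 x ^ 2 - (u1 x - um1 x) ^ 2)]

lemma Admissible.integrable_fsq (hu : Admissible V M u1 u0 um1) :
    Integrable (fun x => (u1 x ^ 2 - um1 x ^ 2) ^ 2) := by
  have hmaj : Integrable (fun x => 2 * (u1 x ^ 4 + um1 x ^ 4)) :=
    ((hu.l4_1.add hu.l4_m1).const_mul 2)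
  apply hmaj.mono' ?_ (Filter.Eventually.of_forall fun x => ?_)
  · apply Continuous.aestronglyMeasurable
    have c1 := hu.smooth1.continuous
    have cm1 := hu.smoothm1.continuous
    fun_prop
  · rw [Real.norm_eq_abs, abs_of_nonneg (by positivity)]
    nlinarith [sq_nonneg (u1 x ^ 2 + um1 x ^ 2), sq_nonneg (u1 x ^ 2 - um1 x ^ 2)]

lemma Admissible.integrable_eInt (hu : Admissible V M u1 u0 um1) :
    Integrable (eInt V βn βs q u1 u0 um1) := by
  unfold eInt
  exact (((((hu.grad2_1.add hu.grad2_0).add hu.grad2_m1).add hu.pot).add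
    (hu.integrable_nsq_sq.const_mul βn)).add (hu.integrable_spin.const_mul βs)).add
    ((hu.l2_1.add hu.l2_m1).const_mul q)

lemma energy_nonneg (hV : ∀ x, 0 ≤ V x) (hβn : 0 ≤ βn) (hβs : 0 ≤ βs) (hq : 0 ≤ q) :
    0 ≤ energy V βn βs q u1 u0 um1 := by
  rw [energy_eq_eInt]
  exact integral_nonneg (eInt_nonneg hV hβn hβs hq)

lemma pot_le_energy (hV : ∀ x, 0 ≤ V x) (hβn : 0 ≤ βn) (hβs : 0 ≤ βs) (hq : 0 ≤ q)
    (hu : Admissible V M u1 u0 um1) :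
    ∫ x : E3, V x * nsq u1 u0 um1 x ≤ energy V βn βs q u1 u0 um1 := by
  rw [energy_eq_eInt]
  apply integral_mono hu.pot hu.integrable_eInt
  intro x
  beta_reduce
  unfold eInt
  have r0 : (0:ℝ) ≤ ‖gradient u1 x‖ ^ 2 + ‖gradient u0 x‖ ^ 2 + ‖gradient um1 x‖ ^ 2 := by
    positivity
  have r1 : 0 ≤ βn * (nsq u1 u0 um1 x) ^ 2 := mul_nonneg hβn (sq_nonneg _)
  have r2 : 0 ≤ βs * (2 * u0 x ^ 2 * (u1 x - um1 x) ^ 2 + (u1 x ^ 2 - um1 x ^ 2) ^ 2) :=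
    mul_nonneg hβs (by positivity)
  have r3 : 0 ≤ q * (u1 x ^ 2 + um1 x ^ 2) := mul_nonneg hq (by positivity)
  linarith

/-- The mixed competitor: admissibility and energy decrease. -/
lemma mix_admissible_energy (hVp : ∀ x, 0 ≤ V x) (hβn : 0 ≤ βn) (hβs : 0 ≤ βs) (hq : 0 ≤ q)
    {M' a b : ℝ} (ha : 0 < a) (hb : 0 < b) (hab : a + b = 1)
    (hu : Admissible V M' u1 u0 um1) :
    Admissible V ((a - b) * M')
      (fun x => Real.sqrt (a * u1 x ^ 2 + b * um1 x ^ 2)) u0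
      (fun x => Real.sqrt (b * u1 x ^ 2 + a * um1 x ^ 2)) ∧
    energy V βn βs q (fun x => Real.sqrt (a * u1 x ^ 2 + b * um1 x ^ 2)) u0
        (fun x => Real.sqrt (b * u1 x ^ 2 + a * um1 x ^ 2))
      + βs * (1 - (a-b)^2) * ∫ x : E3, (u1 x ^ 2 - um1 x ^ 2) ^ 2
      ≤ energy V βn βs q u1 u0 um1 := by
  obtain ⟨hc1, hg1⟩ := sqrtMix ha hb hu.smooth1 hu.smoothm1 hu.nonneg1 hu.nonnegm1
  obtain ⟨hcm1, hgm1⟩ := sqrtMix hb ha hu.smooth1 hu.smoothm1 hu.nonneg1 hu.nonnegm1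
  set w1 : E3 → ℝ := fun x => Real.sqrt (a * u1 x ^ 2 + b * um1 x ^ 2) with hw1_def
  set wm1 : E3 → ℝ := fun x => Real.sqrt (b * u1 x ^ 2 + a * um1 x ^ 2) with hwm1_def
  have hw1sq : ∀ x, w1 x ^ 2 = a * u1 x ^ 2 + b * um1 x ^ 2 :=
    fun x => Real.sq_sqrt (by positivity)
  have hwm1sq : ∀ x, wm1 x ^ 2 = b * u1 x ^ 2 + a * um1 x ^ 2 :=
    fun x => Real.sq_sqrt (by positivity)
  have hnsq : ∀ x, nsq w1 u0 wm1 x = nsq u1 u0 um1 x := by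
    intro x
    unfold nsq
    rw [hw1sq, hwm1sq]
    linear_combination (u1 x ^ 2 + um1 x ^ 2) * hab
  have hdiff : ∀ x, w1 x ^ 2 - wm1 x ^ 2 = (a - b) * (u1 x ^ 2 - um1 x ^ 2) := by
    intro x
    rw [hw1sq, hwm1sq]; ring
  have hsum : ∀ x, w1 x ^ 2 + wm1 x ^ 2 = u1 x ^ 2 + um1 x ^ 2 := by
    intro x
    rw [hw1sq, hwm1sq]
    linear_combination (u1 x ^ 2 + um1 x ^ 2) * hab
  have hprod : ∀ x, u1 x * um1 x ≤ w1 x * wm1 x := by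
    intro x
    rw [hw1_def, hwm1_def]
    rw [← Real.sqrt_mul (by positivity)]
    rw [← Real.sqrt_sq (mul_nonneg (hu.nonneg1 x) (hu.nonnegm1 x))]
    apply Real.sqrt_le_sqrt
    have key : (a * u1 x ^ 2 + b * um1 x ^ 2) * (b * u1 x ^ 2 + a * um1 x ^ 2)
        - (u1 x * um1 x) ^ 2 = a * b * (u1 x ^ 2 - um1 x ^ 2) ^ 2 := by
      linear_combination ((a + b + 1) * (u1 x ^ 2 * um1 x ^ 2)) * hab
    linarith [key, mul_nonneg (mul_nonneg ha.le hb.le) (sq_nonneg (u1 x ^ 2 - um1 x ^ 2))]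
  have hdsq : ∀ x, (w1 x - wm1 x) ^ 2 ≤ (u1 x - um1 x) ^ 2 := by
    intro x
    have h1 := hprod x
    have h2 := hsum x
    have l : (w1 x - wm1 x) ^ 2 = w1 x ^ 2 + wm1 x ^ 2 - 2 * (w1 x * wm1 x) := by ring
    have r : (u1 x - um1 x) ^ 2 = u1 x ^ 2 + um1 x ^ 2 - 2 * (u1 x * um1 x) := by ring
    linarith
  -- admissibility of the mixed state
  have hadm : Admissible V ((a - b) * M') w1 u0 wm1 := by
    refine ⟨hc1, hu.smooth0, hcm1, fun x => Real.sqrt_nonneg _, hu.nonneg0,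
      fun x => Real.sqrt_nonneg _, ?_, hu.l2_0, ?_, ?_, hu.grad2_0, ?_, ?_, hu.l4_0, ?_,
      ?_, ?_, ?_⟩
    · rw [show (fun x => w1 x ^ 2) = fun x => a * u1 x ^ 2 + b * um1 x ^ 2 from funext hw1sq]
      exact (hu.l2_1.const_mul a).add (hu.l2_m1.const_mul b)
    · rw [show (fun x => wm1 x ^ 2) = fun x => b * u1 x ^ 2 + a * um1 x ^ 2 from funext hwm1sq]
      exact (hu.l2_1.const_mul b).add (hu.l2_m1.const_mul a)
    · apply (((hu.grad2_1.const_mul a).add (hu.grad2_m1.const_mul b)).mono'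
        (((continuous_gradient hc1).norm.pow 2).aestronglyMeasurable))
      apply Filter.Eventually.of_forall
      intro x
      simp only [Pi.pow_apply]
      rw [Real.norm_eq_abs, abs_of_nonneg (by positivity)]
      exact hg1 x
    · apply (((hu.grad2_1.const_mul b).add (hu.grad2_m1.const_mul a)).mono'
        (((continuous_gradient hcm1).norm.pow 2).aestronglyMeasurable))
      apply Filter.Eventually.of_forall
      intro x
      simp only [Pi.pow_apply]
      rw [Real.norm_eq_abs, abs_of_nonneg (by positivity)]
      exact hgm1 x
    · apply ((hu.l4_1.add hu.l4_m1).mono' ((hc1.continuous.pow 4).aestronglyMeasurable))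
      apply Filter.Eventually.of_forall
      intro x
      simp only [Pi.pow_apply]
      rw [Real.norm_eq_abs, abs_of_nonneg (by positivity)]
      have h4 : w1 x ^ 4 = (a * u1 x ^ 2 + b * um1 x ^ 2) ^ 2 := by
        rw [show (4:ℕ) = 2 * 2 from rfl, pow_mul, hw1sq x]
      rw [h4]
      simp only [Pi.add_apply]
      have key : u1 x ^ 4 + um1 x ^ 4 - (a * u1 x ^ 2 + b * um1 x ^ 2) ^ 2
          = a * b * (u1 x ^ 2 - um1 x ^ 2) ^ 2 + b * (u1 x ^ 2) ^ 2 + a * (um1 x ^ 2) ^ 2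
            - ((u1 x ^ 2) ^ 2 * (1 + a) + (um1 x ^ 2) ^ 2 * (1 + b)) * (a + b - 1) := by
        ring
      have key2 := key
      rw [hab] at key2
      have hn1 : 0 ≤ a * b * (u1 x ^ 2 - um1 x ^ 2) ^ 2 :=
        mul_nonneg (mul_nonneg ha.le hb.le) (sq_nonneg _)
      have hn2 : 0 ≤ b * (u1 x ^ 2) ^ 2 := mul_nonneg hb.le (sq_nonneg _)
      have hn3 : 0 ≤ a * (um1 x ^ 2) ^ 2 := mul_nonneg ha.le (sq_nonneg _)
      have : u1 x ^ 4 = (u1 x ^ 2) ^ 2 := by ring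
      have : um1 x ^ 4 = (um1 x ^ 2) ^ 2 := by ring
      nlinarith [key2, hn1, hn2, hn3]
    · apply ((hu.l4_1.add hu.l4_m1).mono' ((hcm1.continuous.pow 4).aestronglyMeasurable))
      apply Filter.Eventually.of_forall
      intro x
      simp only [Pi.pow_apply]
      rw [Real.norm_eq_abs, abs_of_nonneg (by positivity)]
      have h4 : wm1 x ^ 4 = (b * u1 x ^ 2 + a * um1 x ^ 2) ^ 2 := by
        rw [show (4:ℕ) = 2 * 2 from rfl, pow_mul, hwm1sq x]
      rw [h4]
      simp only [Pi.add_apply]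
      have key : u1 x ^ 4 + um1 x ^ 4 - (b * u1 x ^ 2 + a * um1 x ^ 2) ^ 2
          = b * a * (u1 x ^ 2 - um1 x ^ 2) ^ 2 + a * (u1 x ^ 2) ^ 2 + b * (um1 x ^ 2) ^ 2
            - ((u1 x ^ 2) ^ 2 * (1 + b) + (um1 x ^ 2) ^ 2 * (1 + a)) * (a + b - 1) := by
        ring
      have key2 := key
      rw [hab] at key2
      have hn1 : 0 ≤ b * a * (u1 x ^ 2 - um1 x ^ 2) ^ 2 :=
        mul_nonneg (mul_nonneg hb.le ha.le) (sq_nonneg _)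
      have hn2 : 0 ≤ a * (u1 x ^ 2) ^ 2 := mul_nonneg ha.le (sq_nonneg _)
      have hn3 : 0 ≤ b * (um1 x ^ 2) ^ 2 := mul_nonneg hb.le (sq_nonneg _)
      have : u1 x ^ 4 = (u1 x ^ 2) ^ 2 := by ring
      have : um1 x ^ 4 = (um1 x ^ 2) ^ 2 := by ring
      nlinarith [key2, hn1, hn2, hn3]
    · rw [show (fun x => V x * nsq w1 u0 wm1 x) = fun x => V x * nsq u1 u0 um1 x from
        funext fun x => by rw [hnsq x]]
      exact hu.pot
    · rw [show (fun x => nsq w1 u0 wm1 x) = fun x => nsq u1 u0 um1 x from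
        funext fun x => hnsq x]
      exact hu.mass
    · rw [show (fun x => w1 x ^ 2 - wm1 x ^ 2) = fun x => (a - b) * (u1 x ^ 2 - um1 x ^ 2) from
        funext hdiff]
      rw [integral_const_mul, hu.magnetization]
  refine ⟨hadm, ?_⟩
  -- energy comparison
  rw [energy_eq_eInt, energy_eq_eInt]
  rw [show βs * (1 - (a-b)^2) * ∫ x : E3, (u1 x ^ 2 - um1 x ^ 2) ^ 2
      = ∫ x : E3, βs * (1 - (a-b)^2) * (u1 x ^ 2 - um1 x ^ 2) ^ 2 from
    (integral_const_mul _ _).symm]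
  rw [← integral_add hadm.integrable_eInt (hu.integrable_fsq.const_mul _)]
  apply integral_mono
    (hadm.integrable_eInt.add (hu.integrable_fsq.const_mul _)) hu.integrable_eInt
  intro x
  simp only [Pi.add_apply]
  unfold eInt
  have e1 : ‖gradient w1 x‖ ^ 2 + ‖gradient wm1 x‖ ^ 2
      ≤ ‖gradient u1 x‖ ^ 2 + ‖gradient um1 x‖ ^ 2 := by
    have k1 := hg1 x
    have k2 := hgm1 x
    have k3 : a * ‖gradient u1 x‖ ^ 2 + b * ‖gradient um1 x‖ ^ 2
        + (b * ‖gradient u1 x‖ ^ 2 + a * ‖gradient um1 x‖ ^ 2)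
        = ‖gradient u1 x‖ ^ 2 + ‖gradient um1 x‖ ^ 2 := by
      linear_combination (‖gradient u1 x‖ ^ 2 + ‖gradient um1 x‖ ^ 2) * hab
    linarith
  have e2 : V x * nsq w1 u0 wm1 x = V x * nsq u1 u0 um1 x := by rw [hnsq x]
  have e3 : βn * (nsq w1 u0 wm1 x) ^ 2 = βn * (nsq u1 u0 um1 x) ^ 2 := by rw [hnsq x]
  have e4 : 2 * u0 x ^ 2 * (w1 x - wm1 x) ^ 2 + (w1 x ^ 2 - wm1 x ^ 2) ^ 2
        + (1 - (a-b)^2) * (u1 x ^ 2 - um1 x ^ 2) ^ 2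
      ≤ 2 * u0 x ^ 2 * (u1 x - um1 x) ^ 2 + (u1 x ^ 2 - um1 x ^ 2) ^ 2 := by
    have h1 := hdsq x
    have h2 := hdiff x
    have h3 : (w1 x ^ 2 - wm1 x ^ 2) ^ 2 = (a - b) ^ 2 * (u1 x ^ 2 - um1 x ^ 2) ^ 2 := by
      rw [h2]; ring
    have h5 : 2 * u0 x ^ 2 * (w1 x - wm1 x) ^ 2 ≤ 2 * u0 x ^ 2 * (u1 x - um1 x) ^ 2 := by
      have := mul_le_mul_of_nonneg_left h1 (by positivity : (0:ℝ) ≤ 2 * u0 x ^ 2)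
      linarith
    have h6 : (1 - (a - b) ^ 2) * (u1 x ^ 2 - um1 x ^ 2) ^ 2
        = (u1 x ^ 2 - um1 x ^ 2) ^ 2 - (a - b) ^ 2 * (u1 x ^ 2 - um1 x ^ 2) ^ 2 := by ring
    linarith
  have e4' : βs * (2 * u0 x ^ 2 * (w1 x - wm1 x) ^ 2 + (w1 x ^ 2 - wm1 x ^ 2) ^ 2)
        + βs * (1 - (a-b)^2) * (u1 x ^ 2 - um1 x ^ 2) ^ 2
      ≤ βs * (2 * u0 x ^ 2 * (u1 x - um1 x) ^ 2 + (u1 x ^ 2 - um1 x ^ 2) ^ 2) := by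
    have := mul_le_mul_of_nonneg_left e4 hβs
    linarith [this]
  have e5 : q * (w1 x ^ 2 + wm1 x ^ 2) = q * (u1 x ^ 2 + um1 x ^ 2) := by rw [hsum x]
  linarith [e1, e2, e3, e4', e5]

/-- Existence of admissible states. -/
lemma exists_admissible (hV : TrapPotential V) {M : ℝ} (h0 : 0 ≤ M) (h1 : M ≤ 1) :
    ∃ w1 w0 wm1 : E3 → ℝ, Admissible V M w1 w0 wm1 := by
  classical
  set c : ContDiffBump (0 : E3) := ⟨1, 2, one_pos, one_lt_two⟩ with hc
  set φ : E3 → ℝ := fun x => c x with hφ_def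
  have hφsm : ContDiff ℝ 1 φ := c.contDiff
  have hφc : Continuous φ := hφsm.continuous
  have hφcs : HasCompactSupport φ := c.hasCompactSupport
  have hφ0 : ∀ x, 0 ≤ φ x := fun x => c.nonneg
  have hφ1 : ∀ x, φ x ≤ 1 := fun x => c.le_one
  have hφ2cs : HasCompactSupport (fun x => φ x ^ 2) :=
    hφcs.comp_left (g := fun t : ℝ => t ^ 2) (by norm_num)
  have hI_int : Integrable (fun x => φ x ^ 2) :=
    (hφc.pow 2).integrable_of_hasCompactSupport hφ2cs
  set I := ∫ x : E3, φ x ^ 2 with hI_def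
  have hIpos : 0 < I := by
    rw [hI_def, integral_pos_iff_support_of_nonneg (fun x => sq_nonneg _) hI_int]
    have hss : Function.support (fun x => φ x ^ 2) = Function.support φ := by
      ext x
      simp [Function.mem_support, pow_eq_zero_iff]
    rw [hss, hφ_def]
    have : Function.support (fun x => c x) = Metric.ball (0:E3) c.rOut := c.support_eq
    rw [this]
    exact Metric.measure_ball_pos volume 0 (by positivity)
  have hIne : I ≠ 0 := ne_of_gt hIpos
  set s1 : ℝ := Real.sqrt ((1 + M) / (2 * I)) with hs1_def
  set sm1 : ℝ := Real.sqrt ((1 - M) / (2 * I)) with hsm1_def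
  have hs1sq : s1 ^ 2 = (1 + M) / (2 * I) := Real.sq_sqrt (by positivity)
  have hsm1sq : sm1 ^ 2 = (1 - M) / (2 * I) := by
    apply Real.sq_sqrt
    have : 0 ≤ 1 - M := by linarith
    positivity
  refine ⟨fun x => s1 * φ x, fun _ => 0, fun x => sm1 * φ x, ?_⟩
  have key_cs : ∀ s : ℝ, HasCompactSupport (fun x => s * φ x) := fun s =>
    hφcs.comp_left (g := fun t : ℝ => s * t) (by norm_num)
  have key_sm : ∀ s : ℝ, ContDiff ℝ 1 (fun x => s * φ x) := fun s => contDiff_const.mul hφsm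
  have key_l2 : ∀ s : ℝ, Integrable (fun x => (s * φ x) ^ 2) := fun s =>
    (((continuous_const.mul hφc).fun_pow 2).integrable_of_hasCompactSupport
      ((key_cs s).comp_left (g := fun t : ℝ => t ^ 2) (by norm_num)))
  have key_l4 : ∀ s : ℝ, Integrable (fun x => (s * φ x) ^ 4) := fun s =>
    (((continuous_const.mul hφc).fun_pow 4).integrable_of_hasCompactSupport
      ((key_cs s).comp_left (g := fun t : ℝ => t ^ 4) (by norm_num)))
  have key_grad : ∀ s : ℝ, Integrable (fun x => ‖gradient (fun y => s * φ y) x‖ ^ 2) := by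
    intro s
    have hsm := key_sm s
    have hgc : Continuous (gradient (fun y => s * φ y)) := continuous_gradient hsm
    have hfd : HasCompactSupport (fderiv ℝ (fun y => s * φ y)) := (key_cs s).fderiv ℝ
    have hgcs : HasCompactSupport (gradient (fun y => s * φ y)) := by
      have : gradient (fun y => s * φ y)
          = (fun L : E3 →L[ℝ] ℝ => (InnerProductSpace.toDual ℝ E3).symm L)
            ∘ (fderiv ℝ (fun y => s * φ y)) := rfl
      rw [this]
      exact hfd.comp_left (by simp)
    exact ((hgc.norm.fun_pow 2).integrable_of_hasCompactSupport
      (hgcs.comp_left (g := fun v : E3 => ‖v‖ ^ 2) (by simp)))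
  have hgrad0 : Integrable (fun x => ‖gradient (fun _ : E3 => (0:ℝ)) x‖ ^ 2) := by
    have : (fun x : E3 => ‖gradient (fun _ : E3 => (0:ℝ)) x‖ ^ 2) = fun _ => 0 := by
      funext x
      rw [gradient_fun_const]
      simp
    rw [this]
    exact integrable_zero _ _ _
  have hl20 : Integrable (fun x : E3 => (0:ℝ) ^ 2) := by
    simpa using (integrable_zero E3 ℝ volume)
  have hl40 : Integrable (fun x : E3 => (0:ℝ) ^ 4) := by
    simpa using (integrable_zero E3 ℝ volume)
  have hnsq_eq : ∀ x, nsq (fun x => s1 * φ x) (fun _ => 0) (fun x => sm1 * φ x) x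
      = (s1 ^ 2 + sm1 ^ 2) * φ x ^ 2 := by
    intro x
    unfold nsq
    ring
  have hpot : Integrable (fun x =>
      V x * nsq (fun x => s1 * φ x) (fun _ => 0) (fun x => sm1 * φ x) x) := by
    obtain ⟨C0, hC0⟩ := hV.bddOnBalls 2
    set Cb : ℝ := max C0 0 with hCb
    have hCb0 : 0 ≤ Cb := le_max_right _ _
    have hmajint : Integrable
        ((Metric.closedBall (0:E3) 2).indicator (fun _ => Cb * (s1 ^ 2 + sm1 ^ 2))) := by
      rw [integrable_indicator_iff measurableSet_closedBall]
      exact (integrableOn_const_iff).mpr (Or.inr measure_closedBall_lt_top)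
    apply hmajint.mono'
    · apply AEStronglyMeasurable.mul hV.meas.aestronglyMeasurable
      apply Continuous.aestronglyMeasurable
      have : Continuous (fun x => (s1 ^ 2 + sm1 ^ 2) * φ x ^ 2) :=
        continuous_const.mul (hφc.pow 2)
      exact this.congr (fun x => (hnsq_eq x).symm)
    · apply Filter.Eventually.of_forall
      intro x
      rw [hnsq_eq x]
      rw [Real.norm_eq_abs, abs_of_nonneg (mul_nonneg (hV.nonneg x) (by positivity))]
      by_cases hx : x ∈ Metric.closedBall (0:E3) 2
      · rw [Set.indicator_of_mem hx]
        have hx2 : ‖x‖ ≤ 2 := by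
          rw [Metric.mem_closedBall, dist_zero_right] at hx
          exact hx
        have hVx : V x ≤ Cb := le_trans (hC0 x hx2) (le_max_left _ _)
        have hφb : φ x ^ 2 ≤ 1 := by
          have := hφ1 x
          have := hφ0 x
          nlinarith
        have h1 : V x * ((s1 ^ 2 + sm1 ^ 2) * φ x ^ 2) ≤ Cb * ((s1 ^ 2 + sm1 ^ 2) * 1) := by
          apply mul_le_mul hVx ?_ (by positivity) hCb0
          apply mul_le_mul_of_nonneg_left hφb (by positivity)
        linarith [h1]
      · rw [Set.indicator_of_notMem hx]
        have hφx : φ x = 0 := by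
          by_contra hne
          apply hx
          have hmem : x ∈ Function.support φ := hne
          rw [hφ_def] at hmem
          have h2 : x ∈ Metric.ball (0:E3) c.rOut := by
            rw [← c.support_eq]; exact hmem
          have : c.rOut = 2 := rfl
          rw [this] at h2
          exact Metric.ball_subset_closedBall h2
        rw [hφx]
        simp
  refine ⟨key_sm s1, contDiff_const, key_sm sm1,
    fun x => mul_nonneg (Real.sqrt_nonneg _) (hφ0 x), fun x => le_refl 0,
    fun x => mul_nonneg (Real.sqrt_nonneg _) (hφ0 x),
    key_l2 s1, hl20, key_l2 sm1,
    key_grad s1, hgrad0, key_grad sm1,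
    key_l4 s1, hl40, key_l4 sm1, hpot, ?_, ?_⟩
  · rw [show (fun x => nsq (fun x => s1 * φ x) (fun _ => 0) (fun x => sm1 * φ x) x)
        = fun x => (s1 ^ 2 + sm1 ^ 2) * φ x ^ 2 from funext hnsq_eq]
    rw [integral_const_mul, ← hI_def, hs1sq, hsm1sq]
    field_simp
    ring
  · have : (fun x => (s1 * φ x) ^ 2 - (sm1 * φ x) ^ 2)
        = fun x => (s1 ^ 2 - sm1 ^ 2) * φ x ^ 2 := by
      funext x; ring
    rw [this, integral_const_mul, ← hI_def, hs1sq, hsm1sq]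
    field_simp
    ring

/-- Quantitative lower bound on the spin integral for low-energy states. -/
lemma spin_integral_lower (hV : TrapPotential V) {M' K R : ℝ} (hM' : 0 < M') (hK : 0 < K)
    (hu : Admissible V M' u1 u0 um1)
    (hβn : 0 ≤ βn) (hβs : 0 ≤ βs) (hq : 0 ≤ q)
    (hE : energy V βn βs q u1 u0 um1 ≤ K)
    (hR : 0 < R) (hVR : ∀ x : E3, R ≤ ‖x‖ → 2 * K / M' ≤ V x) :
    M' ^ 2 / (4 * (volume (Metric.closedBall (0:E3) R)).toReal)
      ≤ ∫ x : E3, (u1 x ^ 2 - um1 x ^ 2) ^ 2 := by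
  set B := Metric.closedBall (0:E3) R with hB_def
  have hBm : MeasurableSet B := measurableSet_closedBall
  set f : E3 → ℝ := fun x => u1 x ^ 2 - um1 x ^ 2 with hf_def
  have hfint : Integrable f := hu.l2_1.sub hu.l2_m1
  have hf2int : Integrable (fun x => f x ^ 2) := hu.integrable_fsq
  have hnsqint : Integrable (nsq u1 u0 um1) := by
    unfold nsq
    exact (hu.l2_1.add hu.l2_0).add hu.l2_m1
  have hnsq0 : ∀ x, 0 ≤ nsq u1 u0 um1 x := fun x => by unfold nsq; positivity
  have hP : ∫ x : E3, V x * nsq u1 u0 um1 x ≤ K :=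
    le_trans (pot_le_energy hV.nonneg hβn hβs hq hu) hE
  set C := 2 * K / M' with hC_def
  have hC0 : 0 < C := by positivity
  -- tail bound
  have t1 : ∫ x in Bᶜ, C * nsq u1 u0 um1 x ≤ ∫ x in Bᶜ, V x * nsq u1 u0 um1 x := by
    apply setIntegral_mono_on (hnsqint.const_mul C).integrableOn hu.pot.integrableOn hBm.compl
    intro x hx
    have hxn : R ≤ ‖x‖ := by
      rw [Set.mem_compl_iff, hB_def, Metric.mem_closedBall, dist_zero_right] at hx
      linarith [not_le.mp hx]
    exact mul_le_mul_of_nonneg_right (hVR x hxn) (hnsq0 x)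
  have t2 : ∫ x in Bᶜ, V x * nsq u1 u0 um1 x ≤ ∫ x : E3, V x * nsq u1 u0 um1 x :=
    setIntegral_le_integral hu.pot
      (Filter.Eventually.of_forall fun x => mul_nonneg (hV.nonneg x) (hnsq0 x))
  have t3 : ∫ x in Bᶜ, nsq u1 u0 um1 x ≤ M' / 2 := by
    have e1 : ∫ x in Bᶜ, C * nsq u1 u0 um1 x = C * ∫ x in Bᶜ, nsq u1 u0 um1 x :=
      integral_const_mul _ _
    have e2 : C * ∫ x in Bᶜ, nsq u1 u0 um1 x ≤ K := by
      rw [← e1]; linarith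
    have e3 : ∫ x in Bᶜ, nsq u1 u0 um1 x ≤ K / C := (le_div_iff₀' hC0).mpr e2
    have e4 : K / C = M' / 2 := by
      rw [hC_def]
      field_simp
    linarith
  have t4 : ∫ x in Bᶜ, f x ≤ ∫ x in Bᶜ, nsq u1 u0 um1 x := by
    apply setIntegral_mono_on hfint.integrableOn hnsqint.integrableOn hBm.compl
    intro x _
    simp only [hf_def]
    unfold nsq
    nlinarith [sq_nonneg (u0 x), sq_nonneg (um1 x)]
  have t6 : M' / 2 ≤ ∫ x in B, f x := by
    have hsplit := integral_add_compl hBm hfint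
    have hmag : ∫ x : E3, f x = M' := hu.magnetization
    linarith
  -- Cauchy–Schwarz on the ball
  set A := (volume B).toReal with hA_def
  have hAfin : volume B ≠ ⊤ := measure_closedBall_lt_top.ne
  have hA0 : 0 < A := by
    rw [hA_def]
    apply ENNReal.toReal_pos _ hAfin
    have : 0 < volume B := by
      rw [hB_def]
      exact lt_of_lt_of_le (Metric.measure_ball_pos volume 0 hR) 
        (measure_mono Metric.ball_subset_closedBall)
    exact this.ne'
  set T := ∫ x in B, f x with hT_def
  have hexp : ∫ x in B, (f x - T / A) ^ 2
      = (∫ x in B, f x ^ 2) - 2 * (T / A) * T + (T / A) ^ 2 * A := by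
    have e : ∀ x, (f x - T / A) ^ 2 = f x ^ 2 - 2 * (T / A) * f x + (T / A) ^ 2 := by
      intro x; ring
    rw [show (fun x => (f x - T / A) ^ 2)
        = fun x => f x ^ 2 - 2 * (T / A) * f x + (T / A) ^ 2 from funext e]
    have i1 : IntegrableOn (fun x => f x ^ 2 - 2 * (T / A) * f x) B volume :=
      hf2int.integrableOn.sub (hfint.integrableOn.const_mul _)
    have i2 : IntegrableOn (fun _ : E3 => (T / A) ^ 2) B volume :=
      (integrableOn_const_iff).mpr (Or.inr (lt_top_iff_ne_top.mpr hAfin))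
    rw [integral_add i1 i2]
    rw [integral_sub hf2int.integrableOn (hfint.integrableOn.const_mul _)]
    rw [integral_const_mul, setIntegral_const]
    rw [← hT_def]
    simp only [smul_eq_mul]
    rw [show volume.real B = A from rfl]
    ring
  have hpos2 : 0 ≤ ∫ x in B, (f x - T / A) ^ 2 :=
    setIntegral_nonneg hBm fun x _ => sq_nonneg _
  have cs : T ^ 2 / A ≤ ∫ x in B, f x ^ 2 := by
    have : 2 * (T / A) * T - (T / A) ^ 2 * A = T ^ 2 / A := by
      field_simp
      ring
    linarith [hexp, hpos2, this.symm.le, this.le]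
  have t7 : ∫ x in B, f x ^ 2 ≤ ∫ x : E3, f x ^ 2 :=
    setIntegral_le_integral hf2int (Filter.Eventually.of_forall fun x => sq_nonneg _)
  have hTpos : 0 < T := lt_of_lt_of_le (by positivity) t6
  have hT2 : (M' / 2) ^ 2 ≤ T ^ 2 := by nlinarith [t6]
  have final : M' ^ 2 / (4 * A) ≤ T ^ 2 / A := by
    rw [show M' ^ 2 / (4 * A) = (M' / 2) ^ 2 / A by ring]
    gcongr
  calc M' ^ 2 / (4 * A) ≤ T ^ 2 / A := final
    _ ≤ ∫ x in B, f x ^ 2 := cs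
    _ ≤ ∫ x : E3, f x ^ 2 := t7

end Helpers

/-- the ground-state energy is strictly increasing in the magnetization. -/
theorem groundEnergy_strictMono_in_M (V : E3 → ℝ) (βn βs q : ℝ)
    (hV : TrapPotential V) (hβn : 0 < βn) (hβs : 0 < βs) (hq : 0 ≤ q) :
    ∀ M M' : ℝ, 0 ≤ M → M < M' → M' ≤ 1 →
      groundEnergy V βn βs q M < groundEnergy V βn βs q M' := by
  intro M M' hM hMM' hM'1
  have hM'0 : 0 < M' := lt_of_le_of_lt hM hMM'
  unfold groundEnergy
  set S' : Set ℝ := {E : ℝ | ∃ u1 u0 um1 : E3 → ℝ, Admissible V M' u1 u0 um1 ∧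
    energy V βn βs q u1 u0 um1 = E} with hS'_def
  set S : Set ℝ := {E : ℝ | ∃ u1 u0 um1 : E3 → ℝ, Admissible V M u1 u0 um1 ∧
    energy V βn βs q u1 u0 um1 = E} with hS_def
  obtain ⟨w1, w0, wm1, hw⟩ := exists_admissible hV (le_trans hM hMM'.le) hM'1
  have hS'ne : S'.Nonempty := ⟨_, w1, w0, wm1, hw, rfl⟩
  have hSbdd : BddBelow S := by
    refine ⟨0, fun E hE => ?_⟩
    obtain ⟨v1, v0, vm1, hv, hE'⟩ := hE
    rw [← hE']
    exact energy_nonneg hV.nonneg hβn.le hβs.le hq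
  have hEg'0 : 0 ≤ sInf S' := by
    apply le_csInf hS'ne
    intro E hE
    obtain ⟨v1, v0, vm1, hv, hE'⟩ := hE
    rw [← hE']
    exact energy_nonneg hV.nonneg hβn.le hβs.le hq
  set K : ℝ := sInf S' + 1 with hK_def
  have hK0 : 0 < K := by linarith
  obtain ⟨R, hR0, hVR⟩ := hV.tendsToInfty (2 * K / M') (by positivity)
  set A := (volume (Metric.closedBall (0:E3) R)).toReal with hA_def
  have hA0 : 0 < A := by
    rw [hA_def]
    apply ENNReal.toReal_pos _ measure_closedBall_lt_top.ne
    exact (lt_of_lt_of_le (Metric.measure_ball_pos volume 0 hR0)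
      (measure_mono Metric.ball_subset_closedBall)).ne'
  set r : ℝ := M / M' with hr_def
  have hr0 : 0 ≤ r := div_nonneg hM hM'0.le
  have hr1 : r < 1 := (div_lt_one hM'0).mpr hMM'
  have hr2 : 0 < 1 - r ^ 2 := by nlinarith
  set δ : ℝ := βs * (1 - r ^ 2) * (M' ^ 2 / (4 * A)) with hδ_def
  have hδ0 : 0 < δ := by
    apply mul_pos (mul_pos hβs hr2)
    positivity
  set ε : ℝ := min 1 δ / 2 with hε_def
  have hε0 : 0 < ε := by
    have : 0 < min 1 δ := lt_min one_pos hδ0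
    positivity
  obtain ⟨Eu, hEuS, hEult⟩ := Real.lt_sInf_add_pos hS'ne hε0
  obtain ⟨u1, u0, um1, hu, hEu⟩ := hEuS
  have hε1 : ε ≤ 1 := by
    rw [hε_def]
    have : min 1 δ ≤ 1 := min_le_left _ _
    linarith
  have hεδ : ε < δ := by
    rw [hε_def]
    have : min 1 δ ≤ δ := min_le_right _ _
    linarith
  have hEuK : energy V βn βs q u1 u0 um1 ≤ K := by
    rw [hEu, hK_def]
    linarith
  have hSpin := spin_integral_lower hV hM'0 hK0 hu hβn.le hβs.le hq hEuK hR0 hVR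
  set a : ℝ := (1 + r) / 2 with ha_def
  set b : ℝ := (1 - r) / 2 with hb_def
  have ha : 0 < a := by rw [ha_def]; linarith
  have hb : 0 < b := by rw [hb_def]; linarith
  have hab : a + b = 1 := by rw [ha_def, hb_def]; ring
  have hab2 : a - b = r := by rw [ha_def, hb_def]; ring
  obtain ⟨hadm, hen⟩ := mix_admissible_energy hV.nonneg hβn.le hβs.le hq ha hb hab hu
  have hmag : (a - b) * M' = M := by
    rw [hab2, hr_def]
    field_simp
  rw [hmag] at hadm
  have h1 : sInf S ≤ energy V βn βs q
      (fun x => Real.sqrt (a * u1 x ^ 2 + b * um1 x ^ 2)) u0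
      (fun x => Real.sqrt (b * u1 x ^ 2 + a * um1 x ^ 2)) :=
    csInf_le hSbdd ⟨_, _, _, hadm, rfl⟩
  have h2 : δ ≤ βs * (1 - (a - b) ^ 2) * ∫ x : E3, (u1 x ^ 2 - um1 x ^ 2) ^ 2 := by
    rw [hab2, hδ_def]
    exact mul_le_mul_of_nonneg_left hSpin (mul_nonneg hβs.le hr2.le)
  calc sInf S ≤ energy V βn βs q
        (fun x => Real.sqrt (a * u1 x ^ 2 + b * um1 x ^ 2)) u0
        (fun x => Real.sqrt (b * u1 x ^ 2 + a * um1 x ^ 2)) := h1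
    _ ≤ energy V βn βs q u1 u0 um1 - δ := by linarith [hen, h2]
    _ = Eu - δ := by rw [hEu]
    _ < sInf S' + ε - δ := by linarith
    _ < sInf S' := by linarith
end
end

section
/- Suppose 0 < M < 1 and q ≥ 0, and let z = (z₁, 0, z₋₁) ∈ 𝔸ᵗʷᵒ_M be the two-component ground state. If z is moreover a ground state of the full problem (ℰ_q[z] ≤ ℰ_q[v] for all v ∈ 𝔸_M), then, with τ = (1+M)/(1−M), the inequality 4β_s ∫ z₁ z₋₁ (z₁ − z₋₁)(τ z₋₁ − z₁) ≥ q(1+M) + ∫ τ S(z₁, z₋₁)/(z₁² + τ z₋₁²) holds, and in particular the integrand τ S(z₁,z₋₁)/(z₁² + τ z₋₁²) is integrable. -/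
open MeasureTheory
open scoped RealInnerProductSpace

noncomputable section

/-- `S(f,g) = |f ∇g − g ∇f|²`. -/
def Sfun (f g : E3 → ℝ) (x : E3) : ℝ := ‖f x • gradient g x - g x • gradient f x‖ ^ 2


section AuxLemmas
open Asymptotics

variable {f g : E3 → ℝ} {τ : ℝ}

lemma lagrange_id (a b τ : ℝ) (u v : E3) :
    ‖a • u + (τ * b) • v‖ ^ 2 + τ * ‖a • v - b • u‖ ^ 2
      = (a ^ 2 + τ * b ^ 2) * (‖u‖ ^ 2 + τ * ‖v‖ ^ 2) := by
  have h : ∀ w : E3, ‖w‖ ^ 2 = ⟪w, w⟫ := fun w => (real_inner_self_eq_norm_sq w).symm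
  rw [h, h, h, h]
  simp only [inner_add_left, inner_add_right, inner_sub_left, inner_sub_right,
    inner_smul_left, inner_smul_right, RCLike.conj_to_real, conj_trivial]
  nlinarith [real_inner_comm u v]

lemma fderiv_zero_of_min {f : E3 → ℝ} (h0 : ∀ y, 0 ≤ f y)
    {x : E3} (hx : f x = 0) : fderiv ℝ f x = 0 := by
  have : IsLocalMin f x := Filter.Eventually.of_forall (fun y => by rw [hx]; exact h0 y)
  exact this.fderiv_eq_zero

/-- the function D = f² + τ g² -/
def Dd (τ : ℝ) (f g : E3 → ℝ) (x : E3) : ℝ := f x ^ 2 + τ * g x ^ 2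
/-- W = √D -/
def Wf (τ : ℝ) (f g : E3 → ℝ) (x : E3) : ℝ := Real.sqrt (Dd τ f g x)
/-- candidate derivative of W -/
def Gc (τ : ℝ) (f g : E3 → ℝ) (x : E3) : E3 →L[ℝ] ℝ :=
  (Real.sqrt (Dd τ f g x))⁻¹ • (f x • fderiv ℝ f x + (τ * g x) • fderiv ℝ g x)

section basic
variable (hτ : 0 < τ) (hf : ContDiff ℝ 1 f) (hg : ContDiff ℝ 1 g)
  (hf0 : ∀ y, 0 ≤ f y) (hg0 : ∀ y, 0 ≤ g y)

include hτ hf0 hg0 in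
lemma D_zero_iff {x : E3} : Dd τ f g x = 0 ↔ f x = 0 ∧ g x = 0 := by
  unfold Dd
  constructor
  · intro h
    have h1 : f x ^ 2 = 0 := by nlinarith [sq_nonneg (f x), sq_nonneg (g x)]
    have h2 : g x ^ 2 = 0 := by nlinarith [sq_nonneg (f x), sq_nonneg (g x)]
    exact ⟨pow_eq_zero_iff two_ne_zero |>.1 h1, pow_eq_zero_iff two_ne_zero |>.1 h2⟩
  · rintro ⟨h1, h2⟩; rw [h1, h2]; ring

lemma D_nonneg (hτ : 0 < τ) (x : E3) : 0 ≤ Dd τ f g x := by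
  unfold Dd; positivity

include hτ hf hg in
lemma hasFDerivAt_D (x : E3) :
    HasFDerivAt (Dd τ f g) ((2 * f x) • fderiv ℝ f x + (2 * τ * g x) • fderiv ℝ g x) x := by
  have h1 : HasFDerivAt f (fderiv ℝ f x) x := (hf.differentiable one_ne_zero x).hasFDerivAt
  have h2 : HasFDerivAt g (fderiv ℝ g x) x := (hg.differentiable one_ne_zero x).hasFDerivAt
  have := ((h1.mul h1).add (((h2.mul h2)).const_mul τ))
  have hfun : Dd τ f g = f * f + fun y => τ * (g * g) y := by ext y; simp [Dd]; ring
  rw [hfun]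
  refine this.congr_fderiv ?_
  ext y; simp; ring

include hτ hf hg hf0 hg0 in
lemma hasFDerivAt_Wf (x : E3) : HasFDerivAt (Wf τ f g) (Gc τ f g x) x := by
  rcases eq_or_lt_of_le (D_nonneg hτ x (f := f) (g := g)) with hD | hD
  · -- D x = 0
    obtain ⟨hfx, hgx⟩ := (D_zero_iff hτ hf0 hg0).1 hD.symm
    have hdf : fderiv ℝ f x = 0 := fderiv_zero_of_min hf0 hfx
    have hdg : fderiv ℝ g x = 0 := fderiv_zero_of_min hg0 hgx
    have hG : Gc τ f g x = 0 := by unfold Gc; rw [hdf, hdg]; simp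
    rw [hG]
    rw [hasFDerivAt_iff_isLittleO_nhds_zero]
    have hWx : Wf τ f g x = 0 := by unfold Wf; rw [← hD]; exact Real.sqrt_zero
    -- bound: 0 ≤ W(x+h) ≤ f(x+h) + √τ g(x+h)
    have hbound : ∀ y : E3, ‖Wf τ f g y‖ ≤ ‖f y + Real.sqrt τ * g y‖ := by
      intro y
      have h1 : 0 ≤ f y + Real.sqrt τ * g y :=
        add_nonneg (hf0 y) (mul_nonneg (Real.sqrt_nonneg τ) (hg0 y))
      unfold Wf
      rw [Real.norm_of_nonneg (Real.sqrt_nonneg _), Real.norm_of_nonneg h1]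
      have : Dd τ f g y ≤ (f y + Real.sqrt τ * g y) ^ 2 := by
        have hs : Real.sqrt τ ^ 2 = τ := Real.sq_sqrt hτ.le
        unfold Dd; nlinarith [mul_nonneg (mul_nonneg (Real.sqrt_nonneg τ) (hf0 y)) (hg0 y)]
      calc Real.sqrt (Dd τ f g y) ≤ Real.sqrt ((f y + Real.sqrt τ * g y)^2) :=
            Real.sqrt_le_sqrt this
        _ = f y + Real.sqrt τ * g y := Real.sqrt_sq h1
    -- f + √τ g is differentiable at x with derivative 0 and value 0
    have hsum : HasFDerivAt (fun y => f y + Real.sqrt τ * g y) (0 : E3 →L[ℝ] ℝ) x := by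
      have h1 : HasFDerivAt f (0 : E3 →L[ℝ] ℝ) x := by
        have := (hf.differentiable one_ne_zero x).hasFDerivAt; rwa [hdf] at this
      have h2 : HasFDerivAt g (0 : E3 →L[ℝ] ℝ) x := by
        have := (hg.differentiable one_ne_zero x).hasFDerivAt; rwa [hdg] at this
      have := h1.add (h2.const_mul (Real.sqrt τ))
      simp only [smul_zero, add_zero] at this; exact this
    rw [hasFDerivAt_iff_isLittleO_nhds_zero] at hsum
    have hz : f x + Real.sqrt τ * g x = 0 := by rw [hfx, hgx]; ring
    simp only [hz, ContinuousLinearMap.zero_apply, add_zero, sub_zero, zero_add] at hsum ⊢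
    have hO : (fun h : E3 => Wf τ f g (x + h)) =O[nhds 0] (fun h => f (x + h) + Real.sqrt τ * g (x + h)) :=
      Asymptotics.isBigO_of_le _ (fun h => hbound (x + h))
    simpa [hWx] using hO.trans_isLittleO hsum
  · -- D x > 0
    have hsq : HasDerivAt Real.sqrt (1 / (2 * Real.sqrt (Dd τ f g x))) (Dd τ f g x) :=
      Real.hasDerivAt_sqrt (ne_of_gt hD)
    have hDf := hasFDerivAt_D hτ hf hg (f := f) (g := g) x
    have hcomp := hsq.comp_hasFDerivAt x hDf
    refine hcomp.congr_fderiv ?_; symm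
    unfold Gc
    rw [smul_add, smul_add, smul_smul, smul_smul, smul_smul, smul_smul]
    congr 1 <;> congr 1
    · rw [div_eq_mul_inv]; ring
    · rw [div_eq_mul_inv]; ring

end basic

section smooth
variable (hτ : 0 < τ) (hf : ContDiff ℝ 1 f) (hg : ContDiff ℝ 1 g)
  (hf0 : ∀ y, 0 ≤ f y) (hg0 : ∀ y, 0 ≤ g y)

include hτ hf0 hg0 in
lemma norm_Gc_le (x : E3) :
    ‖Gc τ f g x‖ ≤ ‖fderiv ℝ f x‖ + Real.sqrt τ * ‖fderiv ℝ g x‖ := by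
  rcases eq_or_lt_of_le (D_nonneg hτ x (f := f) (g := g)) with hD | hD
  · obtain ⟨hfx, hgx⟩ := (D_zero_iff hτ hf0 hg0).1 hD.symm
    unfold Gc
    rw [hfx, hgx]
    simp
    positivity
  · have hfD : f x ≤ Real.sqrt (Dd τ f g x) := by
      rw [show f x = Real.sqrt (f x ^ 2) from (Real.sqrt_sq (hf0 x)).symm]
      apply Real.sqrt_le_sqrt
      unfold Dd; nlinarith [sq_nonneg (g x)]
    have hgD : τ * g x ≤ Real.sqrt τ * Real.sqrt (Dd τ f g x) := by
      rw [← Real.sqrt_mul hτ.le]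
      rw [show τ * g x = Real.sqrt ((τ * g x) ^ 2) from
        (Real.sqrt_sq (by exact mul_nonneg hτ.le (hg0 x))).symm]
      apply Real.sqrt_le_sqrt
      unfold Dd; nlinarith [sq_nonneg (f x), sq_nonneg (g x)]
    have hspos : 0 < Real.sqrt (Dd τ f g x) := Real.sqrt_pos.2 hD
    unfold Gc
    calc ‖(Real.sqrt (Dd τ f g x))⁻¹ • (f x • fderiv ℝ f x + (τ * g x) • fderiv ℝ g x)‖
        ≤ (Real.sqrt (Dd τ f g x))⁻¹ * (f x * ‖fderiv ℝ f x‖ + (τ * g x) * ‖fderiv ℝ g x‖) := by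
          rw [norm_smul]
          rw [Real.norm_of_nonneg (inv_nonneg.2 hspos.le)]
          apply mul_le_mul_of_nonneg_left _ (inv_nonneg.2 hspos.le)
          calc ‖f x • fderiv ℝ f x + (τ * g x) • fderiv ℝ g x‖
              ≤ ‖f x • fderiv ℝ f x‖ + ‖(τ * g x) • fderiv ℝ g x‖ := norm_add_le _ _
            _ = f x * ‖fderiv ℝ f x‖ + (τ * g x) * ‖fderiv ℝ g x‖ := by
                rw [norm_smul, norm_smul, Real.norm_of_nonneg (hf0 x),
                  Real.norm_of_nonneg (mul_nonneg hτ.le (hg0 x))]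
      _ ≤ ‖fderiv ℝ f x‖ + Real.sqrt τ * ‖fderiv ℝ g x‖ := by
          rw [inv_mul_le_iff₀ hspos]
          nlinarith [norm_nonneg (fderiv ℝ f x), norm_nonneg (fderiv ℝ g x),
            mul_le_mul_of_nonneg_right hfD (norm_nonneg (fderiv ℝ f x)),
            mul_le_mul_of_nonneg_right hgD (norm_nonneg (fderiv ℝ g x)),
            Real.sqrt_nonneg τ, hspos.le]

include hτ hf hg hf0 hg0 in
lemma continuous_Gc : Continuous (Gc τ f g) := by
  rw [continuous_iff_continuousAt]
  intro x
  have hcf : Continuous (fderiv ℝ f) := hf.continuous_fderiv one_ne_zero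
  have hcg : Continuous (fderiv ℝ g) := hg.continuous_fderiv one_ne_zero
  have hcD : Continuous (Dd τ f g) := by
    exact ((hf.continuous.pow 2).add (continuous_const.mul (hg.continuous.pow 2)))
  rcases eq_or_lt_of_le (D_nonneg hτ x (f := f) (g := g)) with hD | hD
  · -- continuity at a zero of D, via squeeze
    obtain ⟨hfx, hgx⟩ := (D_zero_iff hτ hf0 hg0).1 hD.symm
    have hdf : fderiv ℝ f x = 0 := fderiv_zero_of_min hf0 hfx
    have hdg : fderiv ℝ g x = 0 := fderiv_zero_of_min hg0 hgx
    have hGx : Gc τ f g x = 0 := by unfold Gc; rw [hdf, hdg]; simp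
    rw [ContinuousAt, hGx]
    apply squeeze_zero_norm (fun y => norm_Gc_le hτ hf0 hg0 y)
    have : Filter.Tendsto (fun y => ‖fderiv ℝ f y‖ + Real.sqrt τ * ‖fderiv ℝ g y‖)
        (nhds x) (nhds (‖fderiv ℝ f x‖ + Real.sqrt τ * ‖fderiv ℝ g x‖)) := by
      exact ((hcf.norm).add (continuous_const.mul hcg.norm)).continuousAt
    rw [hdf, hdg] at this
    simpa using this
  · -- continuity on the open set {D > 0}
    have hne : Real.sqrt (Dd τ f g x) ≠ 0 := ne_of_gt (Real.sqrt_pos.2 hD)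
    apply ContinuousAt.fun_smul
    · exact ((Real.continuous_sqrt.continuousAt).comp hcD.continuousAt).inv₀ hne
    · exact ((hf.continuous.continuousAt.smul hcf.continuousAt).add
        ((continuous_const.mul hg.continuous).continuousAt.smul hcg.continuousAt))

include hτ hf hg hf0 hg0 in
lemma contDiff_Wf : ContDiff ℝ 1 (Wf τ f g) := by
  rw [contDiff_one_iff_fderiv]
  have hdiff : Differentiable ℝ (Wf τ f g) :=
    fun x => (hasFDerivAt_Wf hτ hf hg hf0 hg0 x).differentiableAt
  refine ⟨hdiff, ?_⟩
  have : fderiv ℝ (Wf τ f g) = Gc τ f g := by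
    funext x; exact (hasFDerivAt_Wf hτ hf hg hf0 hg0 x).fderiv
  rw [this]
  exact continuous_Gc hτ hf hg hf0 hg0

include hτ hf hg hf0 hg0 in
lemma gradient_Wf (x : E3) :
    gradient (Wf τ f g) x
      = (Real.sqrt (Dd τ f g x))⁻¹ • (f x • gradient f x + (τ * g x) • gradient g x) := by
  have hfd : fderiv ℝ (Wf τ f g) x = Gc τ f g x := (hasFDerivAt_Wf hτ hf hg hf0 hg0 x).fderiv
  unfold gradient
  rw [hfd]
  unfold Gc
  simp only [map_add, _root_.map_smul]

end smooth


section gradsq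
variable (hτ : 0 < τ) (hf : ContDiff ℝ 1 f) (hg : ContDiff ℝ 1 g)
  (hf0 : ∀ y, 0 ≤ f y) (hg0 : ∀ y, 0 ≤ g y)

include hτ hf hg hf0 hg0 in
lemma gradsq_Wf (x : E3) :
    ‖gradient (Wf τ f g) x‖ ^ 2
      = ‖gradient f x‖ ^ 2 + τ * ‖gradient g x‖ ^ 2
        - τ * Sfun f g x / Dd τ f g x := by
  rcases eq_or_lt_of_le (D_nonneg hτ x (f := f) (g := g)) with hD | hD
  · obtain ⟨hfx, hgx⟩ := (D_zero_iff hτ hf0 hg0).1 hD.symm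
    have hdf : gradient f x = 0 := by
      unfold gradient; rw [fderiv_zero_of_min hf0 hfx]; simp
    have hdg : gradient g x = 0 := by
      unfold gradient; rw [fderiv_zero_of_min hg0 hgx]; simp
    rw [gradient_Wf hτ hf hg hf0 hg0 x, hdf, hdg, Sfun, hdf, hdg]
    simp
  · have hDne : Dd τ f g x ≠ 0 := ne_of_gt hD
    have hsq : Real.sqrt (Dd τ f g x) ^ 2 = Dd τ f g x := Real.sq_sqrt (le_of_lt hD)
    have hspos : 0 < Real.sqrt (Dd τ f g x) := Real.sqrt_pos.2 hD
    rw [gradient_Wf hτ hf hg hf0 hg0 x]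
    rw [norm_smul, mul_pow, Real.norm_of_nonneg (inv_nonneg.2 hspos.le)]
    have hlag := lagrange_id (f x) (g x) τ (gradient f x) (gradient g x)
    have hS : Sfun f g x = ‖f x • gradient g x - g x • gradient f x‖ ^ 2 := rfl
    have : ‖f x • gradient f x + (τ * g x) • gradient g x‖ ^ 2
        = Dd τ f g x * (‖gradient f x‖ ^ 2 + τ * ‖gradient g x‖ ^ 2) - τ * Sfun f g x := by
      rw [hS]; unfold Dd at *; nlinarith [hlag]
    rw [this, inv_pow, hsq]
    field_simp

include hτ hf hg hf0 hg0 in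
lemma Ssq_div_le (x : E3) :
    τ * Sfun f g x / Dd τ f g x ≤ ‖gradient f x‖ ^ 2 + τ * ‖gradient g x‖ ^ 2 := by
  have h := gradsq_Wf hτ hf hg hf0 hg0 x
  nlinarith [sq_nonneg ‖gradient (Wf τ f g) x‖]

lemma Ssq_div_nonneg (hτ : 0 < τ) (x : E3) : 0 ≤ τ * Sfun f g x / Dd τ f g x := by
  apply div_nonneg _ (D_nonneg hτ x)
  have : 0 ≤ Sfun f g x := by rw [Sfun]; positivity
  positivity

end gradsq

lemma gradient_const_mul (c : ℝ) {h : E3 → ℝ} (hh : Differentiable ℝ h) (x : E3) :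
    gradient (fun y => c * h y) x = c • gradient h x := by
  unfold gradient
  rw [fderiv_const_mul (hh x) c, _root_.map_smul]

lemma gradient_zero_fun (x : E3) : gradient (fun _ : E3 => (0:ℝ)) x = 0 := by
  unfold gradient
  rw [fderiv_fun_const]
  simp

lemma gradient_continuous {h : E3 → ℝ} (hh : ContDiff ℝ 1 h) : Continuous (gradient h) :=
  (InnerProductSpace.toDual ℝ E3).symm.continuous.comp (hh.continuous_fderiv one_ne_zero)

lemma normsq_gradient_const_mul (c : ℝ) {h : E3 → ℝ} (hh : Differentiable ℝ h) (x : E3) :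
    ‖gradient (fun y => c * h y) x‖ ^ 2 = c ^ 2 * ‖gradient h x‖ ^ 2 := by
  rw [gradient_const_mul c hh x, norm_smul, mul_pow, Real.norm_eq_abs, sq_abs]

end AuxLemmas

set_option maxHeartbeats 1000000 in
/-- the inequality satisfied by a two-component ground state `z`
that is also a ground state of the full problem. -/
theorem two_component_ground_state_inequality (V : E3 → ℝ) (βn βs q M : ℝ)
    (hV : TrapPotential V) (hβn : 0 < βn) (hβs : 0 < βs) (hq : 0 ≤ q)
    (hM0 : 0 < M) (hM1 : M < 1) (z1 zm1 : E3 → ℝ) (τ : ℝ) (hτ : τ = (1 + M) / (1 - M))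
    (hadm : Admissible V M z1 (fun _ => 0) zm1)
    (htwomin : ∀ v1 vm1 : E3 → ℝ, Admissible V M v1 (fun _ => 0) vm1 →
      energy V βn βs q z1 (fun _ => 0) zm1 ≤ energy V βn βs q v1 (fun _ => 0) vm1)
    (hfullmin : ∀ v1 v0 vm1 : E3 → ℝ, Admissible V M v1 v0 vm1 →
      energy V βn βs q z1 (fun _ => 0) zm1 ≤ energy V βn βs q v1 v0 vm1) :
    Integrable (fun x => τ * Sfun z1 zm1 x / (z1 x ^ 2 + τ * zm1 x ^ 2)) ∧
    4 * βs * (∫ x : E3, z1 x * zm1 x * (z1 x - zm1 x) * (τ * zm1 x - z1 x))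
      ≥ q * (1 + M)
        + ∫ x : E3, τ * Sfun z1 zm1 x / (z1 x ^ 2 + τ * zm1 x ^ 2) := by
  clear htwomin
  have hM1' : (0:ℝ) < 1 - M := by linarith
  have hM0' : (0:ℝ) < 1 + M := by linarith
  have hτpos : 0 < τ := by rw [hτ]; positivity
  have hτM : τ * (1 - M) = 1 + M := by rw [hτ]; field_simp
  have hz1 : ContDiff ℝ 1 z1 := hadm.smooth1
  have hzm1 : ContDiff ℝ 1 zm1 := hadm.smoothm1
  have hz10 : ∀ y, 0 ≤ z1 y := hadm.nonneg1
  have hzm10 : ∀ y, 0 ≤ zm1 y := hadm.nonnegm1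
  have hz1c : Continuous z1 := hz1.continuous
  have hzm1c : Continuous zm1 := hzm1.continuous
  have hWc : ContDiff ℝ 1 (Wf τ z1 zm1) := contDiff_Wf hτpos hz1 hzm1 hz10 hzm10
  have hW2 : ∀ y, Wf τ z1 zm1 y ^ 2 = z1 y ^ 2 + τ * zm1 y ^ 2 := by
    intro y
    have h : (0:ℝ) ≤ z1 y ^ 2 + τ * zm1 y ^ 2 := by positivity
    exact Real.sq_sqrt h
  set Sq : E3 → ℝ := fun x => τ * Sfun z1 zm1 x / (z1 x ^ 2 + τ * zm1 x ^ 2) with hSqdef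
  have hgradW : ∀ x, ‖gradient (Wf τ z1 zm1) x‖ ^ 2
      = ‖gradient z1 x‖ ^ 2 + τ * ‖gradient zm1 x‖ ^ 2 - Sq x := by
    intro x
    rw [hSqdef]
    exact gradsq_Wf hτpos hz1 hzm1 hz10 hzm10 x
  have hSqnn : ∀ x, 0 ≤ Sq x := by
    intro x
    rw [hSqdef]
    exact Ssq_div_nonneg hτpos x
  have hgint : Integrable (fun x => ‖gradient z1 x‖ ^ 2 + τ * ‖gradient zm1 x‖ ^ 2) :=
    hadm.grad2_1.add (hadm.grad2_m1.const_mul τ)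
  have hWgc : Continuous (gradient (Wf τ z1 zm1)) := gradient_continuous hWc
  have hWgint : Integrable (fun x => ‖gradient (Wf τ z1 zm1) x‖ ^ 2) := by
    refine hgint.mono' ((hWgc.norm.pow 2).aestronglyMeasurable)
      (Filter.Eventually.of_forall fun x => ?_)
    rw [Real.norm_of_nonneg (by positivity), hgradW x]
    have := hSqnn x
    linarith
  have hSq_int : Integrable Sq := by
    refine (hgint.sub hWgint).congr (Filter.Eventually.of_forall fun x => ?_)
    simp only [Pi.sub_apply]
    rw [hgradW x]; ring
  have hG0 : Integrable (fun x => z1 x ^ 4 + zm1 x ^ 4) := hadm.l4_1.add hadm.l4_m1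
  have hsqsq : Integrable (fun x => z1 x ^ 2 * zm1 x ^ 2) := by
    refine hG0.mono' (((hz1c.pow 2).mul (hzm1c.pow 2)).aestronglyMeasurable)
      (Filter.Eventually.of_forall fun x => ?_)
    rw [Real.norm_of_nonneg (by positivity)]
    nlinarith [sq_nonneg (z1 x ^ 2 - zm1 x ^ 2), sq_nonneg (z1 x), sq_nonneg (zm1 x)]
  have hm3 : Integrable (fun x => z1 x ^ 3 * zm1 x) := by
    refine hG0.mono' (((hz1c.pow 3).mul hzm1c).aestronglyMeasurable)
      (Filter.Eventually.of_forall fun x => ?_)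
    rw [Real.norm_of_nonneg (mul_nonneg (pow_nonneg (hz10 x) 3) (hzm10 x))]
    nlinarith [sq_nonneg (z1 x * (z1 x - zm1 x)), sq_nonneg (z1 x ^ 2 - zm1 x ^ 2),
      sq_nonneg (z1 x * zm1 x), hz10 x, hzm10 x]
  have hm1 : Integrable (fun x => z1 x * zm1 x ^ 3) := by
    refine hG0.mono' ((hz1c.mul (hzm1c.pow 3)).aestronglyMeasurable)
      (Filter.Eventually.of_forall fun x => ?_)
    rw [Real.norm_of_nonneg (mul_nonneg (hz10 x) (pow_nonneg (hzm10 x) 3))]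
    nlinarith [sq_nonneg (zm1 x * (z1 x - zm1 x)), sq_nonneg (z1 x ^ 2 - zm1 x ^ 2),
      sq_nonneg (z1 x * zm1 x), hz10 x, hzm10 x]
  set mF : E3 → ℝ := fun x => z1 x * zm1 x * (z1 x - zm1 x) * (τ * zm1 x - z1 x) with hmFdef
  have hmF_int : Integrable mF := by
    refine (((hsqsq.const_mul (1+τ)).sub hm3).sub (hm1.const_mul τ)).congr
      (Filter.Eventually.of_forall fun x => ?_)
    simp only [Pi.sub_apply, hmFdef]; ring
  have hqD_int : Integrable (fun x => q * (z1 x ^ 2 + τ * zm1 x ^ 2)) :=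
    (hadm.l2_1.add (hadm.l2_m1.const_mul τ)).const_mul q
  set aF : E3 → ℝ := fun x => -Sq x - q * (z1 x ^ 2 + τ * zm1 x ^ 2)
      + (4*βs*(1+τ)) * (z1 x ^ 2 * zm1 x ^ 2) with haFdef
  set bF : E3 → ℝ := fun x =>
      βs * (-(z1 x ^ 4) - 6*τ*(z1 x ^ 2 * zm1 x ^ 2) - τ^2 * zm1 x ^ 4) with hbFdef
  set cF : E3 → ℝ := fun x =>
      -(4*βs*((z1 x ^ 2 + τ * zm1 x ^ 2) * (z1 x * zm1 x))) with hcFdef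
  have haF_int : Integrable aF := (hSq_int.neg.sub hqD_int).add (hsqsq.const_mul (4*βs*(1+τ)))
  have hbF_int : Integrable bF :=
    (((hadm.l4_1.neg).sub (hsqsq.const_mul (6*τ))).sub (hadm.l4_m1.const_mul (τ^2))).const_mul βs
  have hcF_int : Integrable cF := by
    refine (((hm3.add (hm1.const_mul τ)).const_mul (4*βs)).neg).congr
      (Filter.Eventually.of_forall fun x => ?_)
    simp only [Pi.neg_apply, Pi.add_apply, hcFdef]; ring
  have hcF_nonpos : ∀ x, cF x ≤ 0 := by
    intro x
    simp only [hcFdef]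
    have h1 : 0 ≤ (z1 x ^ 2 + τ * zm1 x ^ 2) * (z1 x * zm1 x) :=
      mul_nonneg (by positivity) (mul_nonneg (hz10 x) (hzm10 x))
    nlinarith [hβs.le]
  set Fz : E3 → ℝ := fun x => ‖gradient z1 x‖ ^ 2 + ‖gradient zm1 x‖ ^ 2
      + V x * (z1 x ^ 2 + zm1 x ^ 2) + βn * (z1 x ^ 2 + zm1 x ^ 2) ^ 2
      + βs * (z1 x ^ 2 - zm1 x ^ 2) ^ 2 + q * (z1 x ^ 2 + zm1 x ^ 2) with hFzdef
  have hVt : Integrable (fun x => V x * (z1 x ^ 2 + zm1 x ^ 2)) :=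
    hadm.pot.congr (Filter.Eventually.of_forall fun x => by simp [nsq])
  have hβnt : Integrable (fun x => βn * (z1 x ^ 2 + zm1 x ^ 2) ^ 2) := by
    refine (hG0.const_mul (2*βn)).mono'
      ((continuous_const.mul (((hz1c.pow 2).add (hzm1c.pow 2)).pow 2)).aestronglyMeasurable)
      (Filter.Eventually.of_forall fun x => ?_)
    rw [Real.norm_of_nonneg (by positivity)]
    nlinarith [sq_nonneg (z1 x ^ 2 - zm1 x ^ 2), hβn.le, sq_nonneg (z1 x ^ 2 + zm1 x ^ 2),
      mul_le_mul_of_nonneg_left (sq_nonneg (z1 x ^ 2 - zm1 x ^ 2)) hβn.le]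
  have hβst : Integrable (fun x => βs * (z1 x ^ 2 - zm1 x ^ 2) ^ 2) := by
    refine (hG0.const_mul (2*βs)).mono'
      ((continuous_const.mul (((hz1c.pow 2).sub (hzm1c.pow 2)).pow 2)).aestronglyMeasurable)
      (Filter.Eventually.of_forall fun x => ?_)
    rw [Real.norm_of_nonneg (by positivity)]
    nlinarith [sq_nonneg (z1 x ^ 2 + zm1 x ^ 2), hβs.le,
      mul_le_mul_of_nonneg_left (sq_nonneg (z1 x ^ 2 + zm1 x ^ 2)) hβs.le]
  have hqt : Integrable (fun x => q * (z1 x ^ 2 + zm1 x ^ 2)) :=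
    (hadm.l2_1.add hadm.l2_m1).const_mul q
  have hFz_int : Integrable Fz := by
    simp only [hFzdef]
    exact ((((hadm.grad2_1.add hadm.grad2_m1).add hVt).add hβnt).add hβst).add hqt
  have hl2sum : (∫ x : E3, z1 x ^ 2) + (∫ x : E3, zm1 x ^ 2) = 1 := by
    have h := hadm.mass
    have h2 : ∫ x : E3, nsq z1 (fun _ => 0) zm1 x = ∫ x : E3, (z1 x ^ 2 + zm1 x ^ 2) :=
      integral_congr_ae (Filter.Eventually.of_forall fun x => by simp [nsq])
    rw [h2, integral_add hadm.l2_1 hadm.l2_m1] at h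
    exact h
  have hl2diff : (∫ x : E3, z1 x ^ 2) - (∫ x : E3, zm1 x ^ 2) = M := by
    have h := hadm.magnetization
    rwa [integral_sub hadm.l2_1 hadm.l2_m1] at h
  have hP : (∫ x : E3, z1 x ^ 2) = (1+M)/2 := by linarith
  have hQ : (∫ x : E3, zm1 x ^ 2) = (1-M)/2 := by linarith
  have hEz : energy V βn βs q z1 (fun _ => 0) zm1 = ∫ x : E3, Fz x := by
    unfold energy
    refine integral_congr_ae (Filter.Eventually.of_forall fun x => ?_)
    simp only [nsq, hFzdef, norm_zero, gradient_zero_fun]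
    ring
  have key : ∀ ε : ℝ, 0 < ε → ε ≤ 1/2 → ε * τ ≤ 1/2 →
      0 ≤ (∫ x : E3, aF x) + ε * (∫ x : E3, bF x)
        + (Real.sqrt (1-ε) * Real.sqrt (1-ε*τ)) * (∫ x : E3, cF x) := by
    intro ε hε hε2 hετ
    have h1e : (0:ℝ) ≤ 1 - ε := by linarith
    have h2e : (0:ℝ) ≤ 1 - ε*τ := by linarith
    have hs1 : Real.sqrt (1-ε) ^ 2 = 1-ε := Real.sq_sqrt h1e
    have hs2 : Real.sqrt (1-ε*τ) ^ 2 = 1-ε*τ := Real.sq_sqrt h2e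
    have hse : Real.sqrt ε ^ 2 = ε := Real.sq_sqrt hε.le
    set s1 := Real.sqrt (1-ε) with hs1def
    set s2 := Real.sqrt (1-ε*τ) with hs2def
    set se := Real.sqrt ε with hsedef
    set v1 : E3 → ℝ := fun y => s1 * z1 y with hv1def
    set v0 : E3 → ℝ := fun y => se * Wf τ z1 zm1 y with hv0def
    set vm1 : E3 → ℝ := fun y => s2 * zm1 y with hvm1def
    have hv1sq : ∀ x, v1 x ^ 2 = (1-ε) * z1 x ^ 2 := by
      intro x; simp only [hv1def]; rw [mul_pow, hs1]
    have hv0sq : ∀ x, v0 x ^ 2 = ε * (z1 x ^ 2 + τ * zm1 x ^ 2) := by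
      intro x; simp only [hv0def]; rw [mul_pow, hse, hW2 x]
    have hvm1sq : ∀ x, vm1 x ^ 2 = (1-ε*τ) * zm1 x ^ 2 := by
      intro x; simp only [hvm1def]; rw [mul_pow, hs2]
    have hnsq2 : ∀ x, nsq v1 v0 vm1 x = z1 x ^ 2 + zm1 x ^ 2 := by
      intro x
      simp only [nsq]
      rw [hv1sq x, hv0sq x, hvm1sq x]
      ring
    have hnsq : ∀ x, nsq v1 v0 vm1 x = nsq z1 (fun _ => 0) zm1 x := by
      intro x
      rw [hnsq2 x]
      simp [nsq]
    have hgv1 : ∀ x, ‖gradient v1 x‖ ^ 2 = (1-ε) * ‖gradient z1 x‖ ^ 2 := by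
      intro x; simp only [hv1def]; rw [normsq_gradient_const_mul s1 (hz1.differentiable one_ne_zero) x, hs1]
    have hgvm1 : ∀ x, ‖gradient vm1 x‖ ^ 2 = (1-ε*τ) * ‖gradient zm1 x‖ ^ 2 := by
      intro x; simp only [hvm1def]; rw [normsq_gradient_const_mul s2 (hzm1.differentiable one_ne_zero) x, hs2]
    have hgv0 : ∀ x, ‖gradient v0 x‖ ^ 2
        = ε * (‖gradient z1 x‖ ^ 2 + τ * ‖gradient zm1 x‖ ^ 2 - Sq x) := by
      intro x; simp only [hv0def]; rw [normsq_gradient_const_mul se (hWc.differentiable one_ne_zero) x, hse,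
        hgradW x]
    have hadmv : Admissible V M v1 v0 vm1 := by
      refine ⟨?_, ?_, ?_, ?_, ?_, ?_, ?_, ?_, ?_, ?_, ?_, ?_, ?_, ?_, ?_, ?_, ?_, ?_⟩
      · simp only [hv1def]; exact contDiff_const.mul hz1
      · simp only [hv0def]; exact contDiff_const.mul hWc
      · simp only [hvm1def]; exact contDiff_const.mul hzm1
      · intro x; simp only [hv1def]; exact mul_nonneg (Real.sqrt_nonneg _) (hz10 x)
      · intro x; simp only [hv0def]; exact mul_nonneg (Real.sqrt_nonneg _) (Real.sqrt_nonneg _)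
      · intro x; simp only [hvm1def]; exact mul_nonneg (Real.sqrt_nonneg _) (hzm10 x)
      · exact (hadm.l2_1.const_mul (1-ε)).congr
          (Filter.Eventually.of_forall fun x => (hv1sq x).symm)
      · refine ((hadm.l2_1.const_mul ε).add (hadm.l2_m1.const_mul (ε*τ))).congr
          (Filter.Eventually.of_forall fun x => ?_)
        simp only [Pi.add_apply]
        rw [hv0sq x]; ring
      · exact (hadm.l2_m1.const_mul (1-ε*τ)).congr
          (Filter.Eventually.of_forall fun x => (hvm1sq x).symm)
      · exact (hadm.grad2_1.const_mul (1-ε)).congr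
          (Filter.Eventually.of_forall fun x => (hgv1 x).symm)
      · exact ((hgint.sub hSq_int).const_mul ε).congr
          (Filter.Eventually.of_forall fun x => (hgv0 x).symm)
      · exact (hadm.grad2_m1.const_mul (1-ε*τ)).congr
          (Filter.Eventually.of_forall fun x => (hgvm1 x).symm)
      · refine (hadm.l4_1.const_mul ((1-ε)^2)).congr
          (Filter.Eventually.of_forall fun x => ?_)
        have h4 : v1 x ^ 4 = (v1 x ^ 2) ^ 2 := by ring
        simp only [Pi.add_apply]
        rw [h4, hv1sq x]; ring
      · refine (((hadm.l4_1.add (hsqsq.const_mul (2*τ))).add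
            (hadm.l4_m1.const_mul (τ^2))).const_mul (ε^2)).congr
          (Filter.Eventually.of_forall fun x => ?_)
        have h4 : v0 x ^ 4 = (v0 x ^ 2) ^ 2 := by ring
        simp only [Pi.add_apply]
        rw [h4, hv0sq x]; ring
      · refine (hadm.l4_m1.const_mul ((1-ε*τ)^2)).congr
          (Filter.Eventually.of_forall fun x => ?_)
        have h4 : vm1 x ^ 4 = (vm1 x ^ 2) ^ 2 := by ring
        simp only [Pi.add_apply]
        rw [h4, hvm1sq x]; ring
      · refine hadm.pot.congr (Filter.Eventually.of_forall fun x => ?_)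
        simp only []
        rw [hnsq x]
      · exact (integral_congr_ae (Filter.Eventually.of_forall hnsq)).trans hadm.mass
      · have e1 : ∀ x, v1 x ^ 2 - vm1 x ^ 2 = (1-ε)*z1 x ^ 2 - (1-ε*τ)*zm1 x ^ 2 := by
          intro x; rw [hv1sq x, hvm1sq x]
        rw [integral_congr_ae (Filter.Eventually.of_forall e1),
          integral_sub (hadm.l2_1.const_mul _) (hadm.l2_m1.const_mul _),
          integral_const_mul, integral_const_mul, hP, hQ]
        linear_combination (ε/2) * hτM
    have hmin := hfullmin v1 v0 vm1 hadmv
    have hpt : ∀ x : E3, ‖gradient v1 x‖ ^ 2 + ‖gradient v0 x‖ ^ 2 + ‖gradient vm1 x‖ ^ 2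
        + V x * nsq v1 v0 vm1 x + βn * (nsq v1 v0 vm1 x) ^ 2
        + βs * (2 * v0 x ^ 2 * (v1 x - vm1 x) ^ 2 + (v1 x ^ 2 - vm1 x ^ 2) ^ 2)
        + q * (v1 x ^ 2 + vm1 x ^ 2)
        = Fz x + (ε * aF x + (ε^2 * bF x + (ε*(s1*s2)) * cF x)) := by
      intro x
      have hcross : (v1 x - vm1 x) ^ 2
          = (1-ε)*z1 x ^ 2 + (1-ε*τ)*zm1 x ^ 2 - 2*(s1*s2)*(z1 x * zm1 x) := by
        simp only [hv1def, hvm1def]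
        linear_combination (z1 x ^ 2) * hs1 + (zm1 x ^ 2) * hs2
      rw [hgv1 x, hgv0 x, hgvm1 x, hnsq2 x, hcross, hv1sq x, hv0sq x, hvm1sq x]
      simp only [hFzdef, haFdef, hbFdef, hcFdef]
      ring
    have hEv : energy V βn βs q v1 v0 vm1
        = (∫ x : E3, Fz x) + (ε * (∫ x : E3, aF x)
          + (ε^2 * (∫ x : E3, bF x) + (ε*(s1*s2)) * (∫ x : E3, cF x))) := by
      unfold energy
      rw [integral_congr_ae (Filter.Eventually.of_forall hpt)]
      have htail2 : Integrable (fun x => ε^2 * bF x + (ε*(s1*s2)) * cF x) :=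
        (hbF_int.const_mul (ε^2)).add (hcF_int.const_mul (ε*(s1*s2)))
      have htail : Integrable (fun x => ε * aF x + (ε^2 * bF x + (ε*(s1*s2)) * cF x)) :=
        (haF_int.const_mul ε).add htail2
      rw [integral_add hFz_int htail]
      rw [integral_add (haF_int.const_mul ε) htail2]
      rw [integral_add (hbF_int.const_mul (ε^2)) (hcF_int.const_mul (ε*(s1*s2)))]
      rw [integral_const_mul ε aF, integral_const_mul (ε^2) bF,
        integral_const_mul (ε*(s1*s2)) cF]
    rw [hEz, hEv] at hmin
    have hfac : ε * ((∫ x : E3, aF x) + ε * (∫ x : E3, bF x)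
        + (s1*s2) * (∫ x : E3, cF x))
        = ε * (∫ x : E3, aF x) + (ε^2 * (∫ x : E3, bF x)
          + (ε*(s1*s2)) * (∫ x : E3, cF x)) := by ring
    have h2 : ε * 0 ≤ ε * ((∫ x : E3, aF x) + ε * (∫ x : E3, bF x)
        + (Real.sqrt (1-ε) * Real.sqrt (1-ε*τ)) * (∫ x : E3, cF x)) := by
      rw [mul_zero, hfac]
      linarith [hmin]
    exact le_of_mul_le_mul_left h2 hε
  have hC0 : (∫ x : E3, cF x) ≤ 0 := integral_nonpos (fun x => hcF_nonpos x)
  obtain ⟨A, hAdef⟩ : ∃ A : ℝ, A = ∫ x : E3, aF x := ⟨_, rfl⟩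
  obtain ⟨B, hBdef⟩ : ∃ B : ℝ, B = ∫ x : E3, bF x := ⟨_, rfl⟩
  obtain ⟨C, hCdef⟩ : ∃ C : ℝ, C = ∫ x : E3, cF x := ⟨_, rfl⟩
  rw [← hCdef] at hC0
  have hAC : 0 ≤ A + C := by
    by_contra hcon
    push_neg at hcon
    set K := |B| + (1+τ)*|C| + 1 with hKdef
    have hKpos : 0 < K := by positivity
    have hACpos : 0 < -(A+C) := by linarith
    set ε := min (min (1/2) (1/(2*τ))) ((-(A+C))/(2*K)) with hεdef
    have h2τ : (0:ℝ) < 2*τ := by linarith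
    have hεpos : 0 < ε :=
      lt_min (lt_min one_half_pos (div_pos one_pos h2τ)) (div_pos hACpos (by linarith))
    have hε2 : ε ≤ 1/2 := le_trans (min_le_left _ _) (min_le_left _ _)
    have hε3 : ε ≤ 1/(2*τ) := le_trans (min_le_left _ _) (min_le_right _ _)
    have hετ : ε * τ ≤ 1/2 := by
      have h4 : ε * (2*τ) ≤ 1 := (le_div_iff₀ h2τ).mp hε3
      nlinarith [h4]
    have hεK : ε ≤ (-(A+C))/(2*K) := min_le_right _ _
    have hkey := key ε hεpos hε2 hετ
    rw [← hAdef, ← hBdef, ← hCdef] at hkey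
    have h1e : (0:ℝ) ≤ 1-ε := by linarith
    have h2e : (0:ℝ) ≤ 1-ε*τ := by linarith
    have hb1 : 1-ε ≤ Real.sqrt (1-ε) := by
      nth_rewrite 1 [show (1:ℝ)-ε = Real.sqrt ((1-ε)^2) from (Real.sqrt_sq h1e).symm]
      exact Real.sqrt_le_sqrt (by nlinarith [hεpos.le, h1e])
    have hb2 : 1-ε*τ ≤ Real.sqrt (1-ε*τ) := by
      nth_rewrite 1 [show (1:ℝ)-ε*τ = Real.sqrt ((1-ε*τ)^2) from (Real.sqrt_sq h2e).symm]
      exact Real.sqrt_le_sqrt (by nlinarith [mul_nonneg hεpos.le hτpos.le, h2e])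
    have hs12 : 1 - ε*(1+τ) ≤ Real.sqrt (1-ε) * Real.sqrt (1-ε*τ) := by
      have hmm : (1-ε)*(1-ε*τ) ≤ Real.sqrt (1-ε) * Real.sqrt (1-ε*τ) :=
        mul_le_mul hb1 hb2 h2e (Real.sqrt_nonneg _)
      nlinarith [mul_nonneg hεpos.le (mul_nonneg hεpos.le hτpos.le)]
    have hsC : Real.sqrt (1-ε) * Real.sqrt (1-ε*τ) * C ≤ (1 - ε*(1+τ)) * C := by
      nlinarith [mul_nonneg (sub_nonneg.2 hs12) (neg_nonneg.2 hC0)]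
    have ht1 : ε * B ≤ ε * |B| := mul_le_mul_of_nonneg_left (le_abs_self B) hεpos.le
    have ht3 : -(ε * ((1+τ) * C)) ≤ ε * ((1+τ) * |C|) := by
      have h1 : -((1+τ)*C) ≤ (1+τ)*|C| := by
        nlinarith [neg_abs_le C, hτpos.le]
      nlinarith [hεpos.le]
    have ht4 : ε * |B| + ε * ((1+τ) * |C|) ≤ ε * K := by
      rw [hKdef]; nlinarith [hεpos.le]
    have hεK2 : ε * K ≤ -(A+C)/2 := by
      calc ε * K ≤ ((-(A+C))/(2*K)) * K := mul_le_mul_of_nonneg_right hεK hKpos.le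
        _ = -(A+C)/2 := by field_simp
    have hexp : (1 - ε*(1+τ)) * C = C - ε*((1+τ)*C) := by ring
    linarith [hkey, hsC, ht1, ht3, ht4, hεK2, hexp.le, hexp.ge]
  have hqDval : (∫ x : E3, q * (z1 x ^ 2 + τ * zm1 x ^ 2)) = q * (1+M) := by
    rw [integral_const_mul q (fun x => z1 x ^ 2 + τ * zm1 x ^ 2),
      integral_add hadm.l2_1 (hadm.l2_m1.const_mul τ),
      integral_const_mul τ (fun x => zm1 x ^ 2), hP, hQ]
    linear_combination (q/2) * hτM
  have hsplit : A + C = -(∫ x : E3, Sq x) - q*(1+M) + 4*βs*(∫ x : E3, mF x) := by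
    rw [hAdef, hCdef]

    rw [← integral_add haF_int hcF_int]
    have hcongr : ∫ x : E3, (aF x + cF x)
        = ∫ x : E3, (-Sq x + (-(q * (z1 x ^ 2 + τ * zm1 x ^ 2)) + (4*βs) * mF x)) := by
      refine integral_congr_ae (Filter.Eventually.of_forall fun x => ?_)
      simp only [haFdef, hcFdef, hmFdef]
      ring
    have k1 : Integrable (fun x => -Sq x) := hSq_int.neg
    have k2 : Integrable (fun x => -(q * (z1 x ^ 2 + τ * zm1 x ^ 2))) := hqD_int.neg
    have k3 : Integrable (fun x => (4*βs) * mF x) := hmF_int.const_mul _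
    have k23 : Integrable (fun x => -(q * (z1 x ^ 2 + τ * zm1 x ^ 2)) + (4*βs) * mF x) :=
      k2.add k3
    rw [hcongr, integral_add k1 k23, integral_add k2 k3, integral_neg, integral_neg,
      integral_const_mul (4*βs) mF, hqDval]
    ring
  constructor
  · exact hSq_int
  · rw [ge_iff_le]
    linarith [hAC, hsplit.le, hsplit.ge]
end
end
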